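/- arXiv:0802.3836 — 6 statements merged into one kernel-verified Lean document; each statement's English description precedes it below -/
import Mathlib

section
/- Let $(A,L)$ be a Lie-Rinehart algebra, $A'$ a commutative $R$-algebra, $\varphi\colon A\to A'$ an algebra morphism, and $\widetilde\omega\colon L\to \mathrm{Der}(A')$ an action of the $R$-Lie algebra $L$ on $A'$ by derivations making $\varphi$ a morphism of $L$-modules, and suppose $\widetilde\omega$ is $A$-linear, where $\mathrm{Der}(A')$ is an $A$-module via $\varphi$. Then the pairing on $A'\otimes_R L$ given by $u\otimes\alpha \otimes v\otimes\beta \mapsto uv\otimes[\alpha,\beta] - (v\beta(u))\otimes\alpha + (u\alpha(v))\otimes\beta$ descends to a well-defined $R$-Lie algebra bracket on $L' = A'\otimes_A L$. -/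
open TensorProduct

universe u v w x y

section LRdefs

variable (R : Type u) [CommRing R]

/-- `φ : A → A'` is (the function underlying) a morphism of `R`-algebras. -/
def IsAlgHomFun {A : Type v} {A' : Type w} [CommRing A] [Algebra R A] [Ring A']
    [Algebra R A'] (φ : A → A') : Prop :=
  IsLinearMap R φ ∧ φ 1 = 1 ∧ ∀ a b : A, φ (a * b) = φ a * φ b

/-- `(A, L)`, with `A`-action `sm` on `L`, bracket `br` and anchor `an`, is a
Lie-Rinehart algebra over `R` (an `(R,A)`-Lie algebra structure on `L`). -/
def IsLR (A : Type v) [CommRing A] [Algebra R A]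
    (L : Type w) [AddCommGroup L] [Module R L]
    (sm : A → L → L) (br : L → L → L) (an : L → A → A) : Prop :=
  (∀ a : A, IsLinearMap R (sm a)) ∧
  (∀ x : L, sm 1 x = x) ∧
  (∀ (a b : A) (x : L), sm (a * b) x = sm a (sm b x)) ∧
  (∀ (a b : A) (x : L), sm (a + b) x = sm a x + sm b x) ∧
  (∀ (r : R) (a : A) (x : L), sm (r • a) x = r • sm a x) ∧
  (∀ x : L, IsLinearMap R (br x)) ∧
  (∀ y : L, IsLinearMap R fun x : L => br x y) ∧
  (∀ x : L, br x x = 0) ∧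
  (∀ x y z : L, br x (br y z) = br (br x y) z + br y (br x z)) ∧
  (∀ x : L, IsLinearMap R (an x)) ∧
  (∀ a : A, IsLinearMap R fun x : L => an x a) ∧
  (∀ (x : L) (a b : A), an x (a * b) = an x a * b + a * an x b) ∧
  (∀ (x y : L) (a : A), an (br x y) a = an x (an y a) - an y (an x a)) ∧
  (∀ (a : A) (x : L) (b : A), an (sm a x) b = a * an x b) ∧
  (∀ (x : L) (a : A) (y : L), br x (sm a y) = sm a (br x y) + sm (an x a) y)

/-- `(φ, ψ)` is a morphism of Lie-Rinehart algebras. -/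
def IsLRHom {A : Type v} [CommRing A] [Algebra R A] {L : Type w} [AddCommGroup L]
    [Module R L] {A' : Type x} [CommRing A'] [Algebra R A'] {L' : Type y}
    [AddCommGroup L'] [Module R L']
    (sm : A → L → L) (br : L → L → L) (an : L → A → A)
    (sm' : A' → L' → L') (br' : L' → L' → L') (an' : L' → A' → A')
    (φ : A → A') (ψ : L → L') : Prop :=
  IsAlgHomFun R φ ∧ IsLinearMap R ψ ∧
  (∀ x y : L, ψ (br x y) = br' (ψ x) (ψ y)) ∧
  (∀ (a : A) (x : L), ψ (sm a x) = sm' (φ a) (ψ x)) ∧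
  (∀ (x : L) (a : A), φ (an x a) = an' (ψ x) (φ a))

/-- `(U, ιA, ιL)` is the universal algebra of the Lie-Rinehart algebra
`(A, L, sm, br, an)`: it satisfies the generating relations and is universal
among `R`-algebras equipped with such a pair of maps. -/
def IsUniversalLR (A : Type v) [CommRing A] [Algebra R A]
    (L : Type w) [AddCommGroup L] [Module R L]
    (sm : A → L → L) (br : L → L → L) (an : L → A → A)
    (U : Type x) [Ring U] [Algebra R U] (ιA : A → U) (ιL : L → U) : Prop :=
  IsAlgHomFun R ιA ∧ IsLinearMap R ιL ∧
  (∀ (a : A) (x : L), ιA a * ιL x = ιL (sm a x)) ∧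
  (∀ x y : L, ιL (br x y) = ιL x * ιL y - ιL y * ιL x) ∧
  (∀ (x : L) (a : A), ιL x * ιA a - ιA a * ιL x = ιA (an x a)) ∧
  ∀ (B : Type x) [Ring B] [Algebra R B] (φA : A → B) (φL : L → B),
    IsAlgHomFun R φA → IsLinearMap R φL →
    (∀ (a : A) (x : L), φA a * φL x = φL (sm a x)) →
    (∀ x y : L, φL (br x y) = φL x * φL y - φL y * φL x) →
    (∀ (x : L) (a : A), φL x * φA a - φA a * φL x = φA (an x a)) →
    ∃! f : U →ₐ[R] B, (∀ a : A, f (ιA a) = φA a) ∧ ∀ x : L, f (ιL x) = φL x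

end LRdefs

/-- given a Lie-Rinehart algebra `(A, L)`, an algebra morphism
`φ = algebraMap A A'`, and an `A`-linear, `φ`-equivariant action `ω̃` of the
`R`-Lie algebra `L` on `A'` by derivations, the pairing
`u⊗α ⊗ v⊗β ↦ uv⊗[α,β] - (v·β(u))⊗α + (u·α(v))⊗β` descends to a well-defined
`R`-Lie algebra bracket on `L' = A' ⊗[A] L`. -/
theorem stmt2 (R : Type u) [CommRing R] (A : Type v) [CommRing A] [Algebra R A]
    (A' : Type v) [CommRing A'] [Algebra R A'] [Algebra A A'] [IsScalarTower R A A']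
    [SMulCommClass A R A']
    (L : Type v) [AddCommGroup L] [Module R L] [Module A L] [IsScalarTower R A L]
    (br : L → L → L) (an : L → A → A)
    (h : IsLR R A L (fun a x => a • x) br an)
    (ω' : L → A' → A')
    (hlin : ∀ x : L, IsLinearMap R (ω' x))
    (hlinx : ∀ u : A', IsLinearMap R fun x : L => ω' x u)
    (hder : ∀ (x : L) (u v : A'), ω' x (u * v) = ω' x u * v + u * ω' x v)
    (hlie : ∀ (x y : L) (u : A'),
      ω' (br x y) u = ω' x (ω' y u) - ω' y (ω' x u))
    (hequiv : ∀ (x : L) (a : A),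
      ω' x (algebraMap A A' a) = algebraMap A A' (an x a))
    (hA : ∀ (a : A) (x : L) (u : A'),
      ω' (a • x) u = algebraMap A A' a * ω' x u) :
    ∃ br' : (A' ⊗[A] L) → (A' ⊗[A] L) → (A' ⊗[A] L),
      (∀ z : A' ⊗[A] L, IsLinearMap R (br' z)) ∧
      (∀ z : A' ⊗[A] L, IsLinearMap R fun w : A' ⊗[A] L => br' w z) ∧
      (∀ z : A' ⊗[A] L, br' z z = 0) ∧
      (∀ z w t : A' ⊗[A] L,
        br' z (br' w t) = br' (br' z w) t + br' w (br' z t)) ∧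
      (∀ (u v : A') (α β : L),
        br' (u ⊗ₜ[A] α) (v ⊗ₜ[A] β) =
          (u * v) ⊗ₜ[A] br α β - (v * ω' β u) ⊗ₜ[A] α + (u * ω' α v) ⊗ₜ[A] β) := by
  obtain ⟨-, -, -, -, -, hbr_lin, hbr_lin', hbr_alt, hbr_jac, -, -, -, -, -, hbr_sm0⟩ := h
  have badd : ∀ (α β β' : L), br α (β + β') = br α β + br α β' :=
    fun α β β' => (hbr_lin α).map_add β β'
  have badd' : ∀ (α α' β : L), br (α + α') β = br α β + br α' β :=
    fun α α' β => (hbr_lin' β).map_add α α'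
  have wadd : ∀ (u : A') (β β' : L), ω' (β + β') u = ω' β u + ω' β' u :=
    fun u β β' => (hlinx u).map_add β β'
  have wadd' : ∀ (β : L) (u u' : A'), ω' β (u + u') = ω' β u + ω' β u' :=
    fun β u u' => (hlin β).map_add u u'
  have wsmul' : ∀ (β : L) (r : R) (u : A'), ω' β (r • u) = r • ω' β u :=
    fun β r u => (hlin β).map_smul r u
  have hbr_sm : ∀ (x : L) (a : A) (y : L), br x (a • y) = a • br x y + (an x a) • y :=
    fun x a y => hbr_sm0 x a y
  have hskew : ∀ x y : L, br y x = -br x y := by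
    intro x y
    have e0 := hbr_alt (x + y)
    have e1 : br (x + y) (x + y) = br (x + y) x + br (x + y) y :=
      (hbr_lin (x + y)).map_add x y
    have e2 : br (x + y) x = br x x + br y x := (hbr_lin' x).map_add x y
    have e3 : br (x + y) y = br x y + br y y := (hbr_lin' y).map_add x y
    rw [e1, e2, e3, hbr_alt x, hbr_alt y, zero_add, add_zero] at e0
    exact eq_neg_of_add_eq_zero_left e0
  have hbr_sm' : ∀ (a : A) (x y : L), br (a • x) y = a • br x y - (an y a) • x := by
    intro a x y
    rw [hskew y (a • x), hbr_sm y a x, hskew x y]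
    simp only [smul_neg, neg_add, neg_neg]
    abel
  have addhom_ext : ∀ (f g : A' ⊗[A] L →+ A' ⊗[A] L),
      (∀ (v : A') (β : L), f (v ⊗ₜ[A] β) = g (v ⊗ₜ[A] β)) → f = g := by
    intro f g hfg
    apply AddMonoidHom.ext
    intro z
    induction z using TensorProduct.induction_on with
    | zero => simp
    | tmul v β => exact hfg v β
    | add x y hx hy => simp [map_add, hx, hy]
  obtain ⟨Φ, hΦ⟩ : ∃ Φ : (A' ⊗[A] L) →+ ((A' ⊗[A] L) →+ (A' ⊗[A] L)),
      ∀ (u v : A') (α β : L), Φ (u ⊗ₜ[A] α) (v ⊗ₜ[A] β) =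
        (u * v) ⊗ₜ[A] br α β - (v * ω' β u) ⊗ₜ[A] α + (u * ω' α v) ⊗ₜ[A] β := by
    refine ⟨TensorProduct.liftAddHom
      (AddMonoidHom.mk'
        (fun u => AddMonoidHom.mk'
          (fun α => TensorProduct.liftAddHom
            (AddMonoidHom.mk'
              (fun v => AddMonoidHom.mk'
                (fun β => (u * v) ⊗ₜ[A] br α β - (v * ω' β u) ⊗ₜ[A] α
                  + (u * ω' α v) ⊗ₜ[A] β)
                (fun β₁ β₂ => by
                  simp only [badd, wadd, mul_add, add_mul, tmul_add, add_tmul]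
                  abel))
              (fun v₁ v₂ => by
                apply AddMonoidHom.ext
                intro β
                simp only [AddMonoidHom.mk'_apply, AddMonoidHom.add_apply, wadd',
                  mul_add, add_mul, tmul_add, add_tmul]
                abel))
            (by
              intro a v β
              simp only [AddMonoidHom.mk'_apply]
              simp only [hbr_sm, hA, Algebra.smul_def, hder, hequiv, tmul_add,
                tmul_smul, smul_tmul', mul_add, add_mul, add_tmul, sub_tmul, tmul_sub]
              ring_nf
              try simp only [add_tmul, sub_tmul]
              abel))
          (fun α₁ α₂ => by
            apply addhom_ext
            intro v β
            simp only [TensorProduct.liftAddHom_tmul, AddMonoidHom.mk'_apply,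
              AddMonoidHom.add_apply, badd', wadd, mul_add, add_mul, tmul_add, add_tmul]
            abel))
        (fun u₁ u₂ => by
          apply AddMonoidHom.ext
          intro α
          simp only [AddMonoidHom.add_apply, AddMonoidHom.mk'_apply]
          apply addhom_ext
          intro v β
          simp only [TensorProduct.liftAddHom_tmul, AddMonoidHom.mk'_apply,
            AddMonoidHom.add_apply, wadd', mul_add, add_mul, tmul_add, add_tmul]
          abel))
      (by
        intro a u α
        apply addhom_ext
        intro v β
        simp only [TensorProduct.liftAddHom_tmul, AddMonoidHom.mk'_apply]
        simp only [hbr_sm', hA, Algebra.smul_def, hder, hequiv, tmul_sub, tmul_add,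
          tmul_smul, smul_tmul', mul_add, add_mul, mul_sub, sub_mul, add_tmul, sub_tmul]
        ring_nf
        try simp only [add_tmul, sub_tmul]
        abel),
      fun u v α β => by
        simp [TensorProduct.liftAddHom_tmul, AddMonoidHom.mk'_apply]⟩
  have hsmul_right : ∀ (z w : A' ⊗[A] L) (r : R), Φ z (r • w) = r • Φ z w := by
    intro z w r
    induction z using TensorProduct.induction_on with
    | zero => simp
    | add x y hx hy =>
      simp only [map_add, AddMonoidHom.add_apply, hx, hy, smul_add]
    | tmul u α =>
      induction w using TensorProduct.induction_on with
      | zero => simp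
      | add x y hx hy => simp only [map_add, hx, hy, smul_add]
      | tmul v β =>
        rw [smul_tmul', hΦ, hΦ]
        simp only [smul_sub, smul_add, mul_smul_comm, smul_mul_assoc, wsmul',
          ← TensorProduct.smul_tmul']
  have hsmul_left : ∀ (z w : A' ⊗[A] L) (r : R), Φ (r • z) w = r • Φ z w := by
    intro z w r
    induction z using TensorProduct.induction_on with
    | zero => simp
    | add x y hx hy =>
      rw [smul_add]
      simp only [map_add, AddMonoidHom.add_apply, hx, hy, smul_add]
    | tmul u α =>
      rw [smul_tmul']
      induction w using TensorProduct.induction_on with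
      | zero => simp
      | add x y hx hy => simp only [map_add, hx, hy, smul_add]
      | tmul v β =>
        rw [hΦ, hΦ]
        simp only [smul_sub, smul_add, mul_smul_comm, smul_mul_assoc, wsmul',
          ← TensorProduct.smul_tmul']
  have hanti : ∀ z w, Φ z w = -Φ w z := by
    intro z w
    induction z using TensorProduct.induction_on with
    | zero => simp
    | add x y hx hy =>
      simp only [map_add, AddMonoidHom.add_apply, hx, hy]
      abel
    | tmul u α =>
      induction w using TensorProduct.induction_on with
      | zero => simp
      | add x y hx hy =>
        simp only [map_add, AddMonoidHom.add_apply, hx, hy]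
        abel
      | tmul v β =>
        rw [hΦ, hΦ, hskew α β, tmul_neg, mul_comm v u]
        abel
  have halt : ∀ z, Φ z z = 0 := by
    intro z
    induction z using TensorProduct.induction_on with
    | zero => simp
    | tmul u α =>
      rw [hΦ, hbr_alt, tmul_zero]
      abel
    | add x y hx hy =>
      simp only [map_add, AddMonoidHom.add_apply, hx, hy, hanti x y]
      abel
  have hjac : ∀ z w t, Φ z (Φ w t) = Φ (Φ z w) t + Φ w (Φ z t) := by
    intro z w t
    induction z using TensorProduct.induction_on with
    | zero => simp
    | add x y hx hy =>
      simp only [map_add, AddMonoidHom.add_apply, hx, hy]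
      abel
    | tmul u α =>
      induction w using TensorProduct.induction_on with
      | zero => simp
      | add x y hx hy =>
        simp only [map_add, AddMonoidHom.add_apply, hx, hy]
        abel
      | tmul v β =>
        induction t using TensorProduct.induction_on with
        | zero => simp
        | add x y hx hy =>
          simp only [map_add, AddMonoidHom.add_apply, hx, hy]
          abel
        | tmul w' γ =>
          simp only [hΦ, map_add, map_sub, AddMonoidHom.add_apply,
            AddMonoidHom.sub_apply]
          simp only [hlie, hder, mul_add, add_mul, mul_sub, sub_mul, tmul_add,
            add_tmul, tmul_sub, sub_tmul]
          simp only [hbr_jac α β γ, hskew α β, tmul_add, tmul_neg]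
          ring_nf
          abel
  refine ⟨fun z w => Φ z w,
    fun z => ⟨fun a b => map_add (Φ z) a b, fun r x => hsmul_right z x r⟩,
    fun z => ⟨fun a b => by simp only [map_add, AddMonoidHom.add_apply],
      fun r x => hsmul_left x z r⟩,
    halt, hjac, fun u v α β => hΦ u v α β⟩
end

section
/- Under the hypotheses of the induced-structure construction (Proposition on induced Lie-Rinehart structures), the pairing $A'\otimes_R L\otimes_R A'\to A'$, $u\otimes\alpha\otimes v\mapsto u\cdot\alpha(v)$, descends to an action $\omega'\colon L'=A'\otimes_A L\to\mathrm{Der}(A')$ of $L'$ on $A'$ by derivations, and together with the induced bracket it endows $L'$ with an $(R,A')$-Lie algebra structure such that $(\varphi,\varphi\otimes\mathrm{Id})\colon(A,L)\to(A',L')$ is a morphism of Lie-Rinehart algebras. -/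
open TensorProduct

universe u v w x y

set_option linter.unusedSectionVars false
set_option maxHeartbeats 2000000

section Aux
variable {R : Type u} [CommRing R] {A : Type v} [CommRing A] [Algebra R A]
    {A' : Type v} [CommRing A'] [Algebra R A'] [Algebra A A'] [IsScalarTower R A A']
    [SMulCommClass A R A']
    {L : Type v} [AddCommGroup L] [Module R L] [Module A L] [IsScalarTower R A L]
    (br : L → L → L) (an : L → A → A) (ω' : L → A' → A')

/-- helper : extensionality for additive maps out of the tensor product -/
theorem myTmulExt {M : Type v} [AddCommMonoid M] {f g : A' ⊗[A] L →+ M}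
    (h : ∀ (u : A') (x : L), f (u ⊗ₜ[A] x) = g (u ⊗ₜ[A] x)) : f = g := by
  apply DFunLike.ext
  intro z
  induction z using TensorProduct.induction_on with
  | zero => simp
  | tmul u x => exact h u x
  | add x y hx hy => simp [hx, hy]

variable (hlin : ∀ x : L, IsLinearMap R (ω' x))
    (hlinx : ∀ u : A', IsLinearMap R fun x : L => ω' x u)
    (hder : ∀ (x : L) (u v : A'), ω' x (u * v) = ω' x u * v + u * ω' x v)
    (hequiv : ∀ (x : L) (a : A), ω' x (algebraMap A A' a) = algebraMap A A' (an x a))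
    (hA : ∀ (a : A) (x : L) (u : A'), ω' (a • x) u = algebraMap A A' a * ω' x u)

/-- the anchor `anT z : A' →ₗ[R] A'` for `z : A' ⊗[A] L`. -/
noncomputable def anT : A' ⊗[A] L →+ (A' →ₗ[R] A') :=
  TensorProduct.liftAddHom
    { toFun := fun u =>
        { toFun := fun x => u • IsLinearMap.mk' (ω' x) (hlin x)
          map_zero' := by
            ext v
            simpa using congrArg (u * ·) ((hlinx v).map_zero)
          map_add' := by
            intro x y; ext v
            simp [mul_add, (hlinx v).map_add] }
      map_zero' := by ext x v; simp
      map_add' := by intro u u'; ext x v; simp [add_mul, add_smul] }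
    (by
      intro a u x
      ext v
      simp only [AddMonoidHom.coe_mk, ZeroHom.coe_mk, LinearMap.smul_apply,
        IsLinearMap.mk'_apply, smul_eq_mul]
      rw [hA, Algebra.smul_def]
      ring)

@[simp] theorem anT_tmul (u : A') (x : L) (v : A') :
    anT ω' hlin hlinx hA (u ⊗ₜ[A] x) v = u * ω' x v := by
  simp [anT]

end Aux

set_option linter.unusedSectionVars false
set_option maxHeartbeats 2000000

section Aux2
variable {R : Type u} [CommRing R] {A : Type v} [CommRing A] [Algebra R A]
    {A' : Type v} [CommRing A'] [Algebra R A'] [Algebra A A'] [IsScalarTower R A A']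
    [SMulCommClass A R A']
    {L : Type v} [AddCommGroup L] [Module R L] [Module A L] [IsScalarTower R A L]
    {br : L → L → L} {an : L → A → A} {ω' : L → A' → A'}
    (hlin : ∀ x : L, IsLinearMap R (ω' x))
    (hlinx : ∀ u : A', IsLinearMap R fun x : L => ω' x u)
    (hder : ∀ (x : L) (u v : A'), ω' x (u * v) = ω' x u * v + u * ω' x v)
    (hequiv : ∀ (x : L) (a : A), ω' x (algebraMap A A' a) = algebraMap A A' (an x a))
    (hA : ∀ (a : A) (x : L) (u : A'), ω' (a • x) u = algebraMap A A' a * ω' x u)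
    (hbr1 : ∀ x : L, IsLinearMap R (br x))
    (hbr2 : ∀ y : L, IsLinearMap R fun x : L => br x y)
    (halt : ∀ x : L, br x x = 0)
    (hleib : ∀ (x : L) (a : A) (y : L), br x (a • y) = a • br x y + (an x a) • y)

include hbr1 hbr2 halt in
theorem br_anti (x y : L) : br x y = - br y x := by
  have h := halt (x + y)
  rw [(hbr1 (x+y)).map_add, (hbr2 x).map_add, (hbr2 y).map_add, halt x, halt y] at h
  -- h : 0 + br x y + (br y x + 0) = 0
  rw [eq_neg_iff_add_eq_zero]
  linear_combination (norm := abel) h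

/-- `a • y = algebraMap a * y` in `A'` -/
theorem asmul (a : A) (u : A') : a • u = algebraMap A A' a * u := Algebra.smul_def a u

include hlin hder hequiv hbr1 hleib in
/-- theta u α : the "positive part" of the bracket with `u ⊗ α`. -/
noncomputable def theta (u : A') (x : L) : A' ⊗[A] L →+ A' ⊗[A] L :=
  TensorProduct.liftAddHom
    { toFun := fun v =>
        { toFun := fun y => (u * v) ⊗ₜ[A] br x y + (u * ω' x v) ⊗ₜ[A] y
          map_zero' := by simp [(hbr1 x).map_zero]
          map_add' := by
            intro y y'
            simp only [(hbr1 x).map_add, tmul_add]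
            abel }
      map_zero' := by ext y; simp [(hlin x).map_zero]
      map_add' := by
        intro v v'; ext y
        simp only [mul_add, (hlin x).map_add, add_tmul, AddMonoidHom.coe_mk,
          ZeroHom.coe_mk, AddMonoidHom.add_apply]
        abel }
    (by
      intro a v y
      simp only [AddMonoidHom.coe_mk, ZeroHom.coe_mk]
      rw [hleib, tmul_add, tmul_smul, ← smul_tmul, asmul, asmul, hder, hequiv,
        smul_tmul', asmul, tmul_smul, smul_tmul', asmul, mul_add, add_tmul]
      ring_nf
      abel)

@[simp] theorem theta_tmul (u : A') (x : L) (v : A') (y : L) :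
    theta hlin hder hequiv hbr1 hleib u x (v ⊗ₜ[A] y) =
      (u * v) ⊗ₜ[A] br x y + (u * ω' x v) ⊗ₜ[A] y := by
  simp [theta]

end Aux2

section Aux3
variable {R : Type u} [CommRing R] {A : Type v} [CommRing A] [Algebra R A]
    {A' : Type v} [CommRing A'] [Algebra R A'] [Algebra A A'] [IsScalarTower R A A']
    [SMulCommClass A R A']
    {L : Type v} [AddCommGroup L] [Module R L] [Module A L] [IsScalarTower R A L]
    {br : L → L → L} {an : L → A → A} {ω' : L → A' → A'}
    (hlin : ∀ x : L, IsLinearMap R (ω' x))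
    (hlinx : ∀ u : A', IsLinearMap R fun x : L => ω' x u)
    (hder : ∀ (x : L) (u v : A'), ω' x (u * v) = ω' x u * v + u * ω' x v)
    (hequiv : ∀ (x : L) (a : A), ω' x (algebraMap A A' a) = algebraMap A A' (an x a))
    (hA : ∀ (a : A) (x : L) (u : A'), ω' (a • x) u = algebraMap A A' a * ω' x u)
    (hbr1 : ∀ x : L, IsLinearMap R (br x))
    (hbr2 : ∀ y : L, IsLinearMap R fun x : L => br x y)
    (halt : ∀ x : L, br x x = 0)
    (hleib : ∀ (x : L) (a : A) (y : L), br x (a • y) = a • br x y + (an x a) • y)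

include hbr1 hbr2 halt hleib in
theorem br_leib' (a : A) (x y : L) : br (a • x) y = a • br x y - (an y a) • x := by
  rw [br_anti hbr1 hbr2 halt (a • x) y, hleib y a x, br_anti hbr1 hbr2 halt y x]
  simp only [smul_neg, neg_add, neg_neg]
  abel

/-- the correction term `K u α w = (anT w u) ⊗ α`. -/
noncomputable def corrK (u : A') (x : L) : A' ⊗[A] L →+ A' ⊗[A] L :=
  AddMonoidHom.mk' (fun w => (anT ω' hlin hlinx hA w u) ⊗ₜ[A] x)
    (by intro w w'; simp only [map_add, LinearMap.add_apply, add_tmul])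

@[simp] theorem corrK_tmul (u : A') (x : L) (v : A') (y : L) :
    corrK hlin hlinx hA u x (v ⊗ₜ[A] y) = (v * ω' y u) ⊗ₜ[A] x := by
  simp [corrK]

include hder hequiv hbr1 hbr2 halt hleib in
/-- the induced bracket, as an additive pairing. -/
noncomputable def brT : A' ⊗[A] L →+ (A' ⊗[A] L →+ A' ⊗[A] L) :=
  TensorProduct.liftAddHom
    { toFun := fun u =>
        { toFun := fun x => theta hlin hder hequiv hbr1 hleib u x - corrK hlin hlinx hA u x
          map_zero' := by
            apply myTmulExt; intro v y
            simp [(hbr2 y).map_zero, (hlin y).map_zero, (hlinx v).map_zero]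
          map_add' := by
            intro x x'; apply myTmulExt; intro v y
            simp only [AddMonoidHom.sub_apply, theta_tmul, corrK_tmul,
              AddMonoidHom.add_apply, (hbr2 y).map_add, (hlinx v).map_add,
              add_tmul, tmul_add, mul_add]
            abel }
      map_zero' := by
        apply AddMonoidHom.ext; intro x; apply myTmulExt; intro v y
        simp [(hlin y).map_zero]
      map_add' := by
        intro u u'; apply AddMonoidHom.ext; intro x; apply myTmulExt; intro v y
        simp only [AddMonoidHom.coe_mk, ZeroHom.coe_mk,
          AddMonoidHom.sub_apply, theta_tmul, corrK_tmul,
          AddMonoidHom.add_apply, (hlin y).map_add,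
          add_mul, mul_add, add_tmul, tmul_add]
        abel }
    (by
      intro a u x
      apply myTmulExt; intro v y
      simp only [AddMonoidHom.coe_mk, ZeroHom.coe_mk, AddMonoidHom.sub_apply,
        theta_tmul, corrK_tmul]
      rw [br_leib' hbr1 hbr2 halt hleib, hA, asmul a u, hder, hequiv,
        tmul_sub, tmul_smul, smul_tmul', asmul, tmul_smul, smul_tmul', asmul,
        tmul_smul, smul_tmul', asmul]
      rw [mul_add, add_tmul]
      ring_nf
      abel)

@[simp] theorem brT_tmul (u : A') (x : L) (v : A') (y : L) :
    brT hlin hlinx hder hequiv hA hbr1 hbr2 halt hleib (u ⊗ₜ[A] x) (v ⊗ₜ[A] y) =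
      (u * v) ⊗ₜ[A] br x y - (v * ω' y u) ⊗ₜ[A] x + (u * ω' x v) ⊗ₜ[A] y := by
  simp [brT]
  abel

end Aux3

section Aux4
variable {R : Type u} [CommRing R] {A : Type v} [CommRing A] [Algebra R A]
    {A' : Type v} [CommRing A'] [Algebra R A'] [Algebra A A'] [IsScalarTower R A A']
    [SMulCommClass A R A']
    {L : Type v} [AddCommGroup L] [Module R L] [Module A L] [IsScalarTower R A L]
    {br : L → L → L} {an : L → A → A} {ω' : L → A' → A'}
    (hlin : ∀ x : L, IsLinearMap R (ω' x))
    (hlinx : ∀ u : A', IsLinearMap R fun x : L => ω' x u)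
    (hder : ∀ (x : L) (u v : A'), ω' x (u * v) = ω' x u * v + u * ω' x v)
    (hlie : ∀ (x y : L) (u : A'), ω' (br x y) u = ω' x (ω' y u) - ω' y (ω' x u))
    (hbr1 : ∀ x : L, IsLinearMap R (br x))
    (hbr2 : ∀ y : L, IsLinearMap R fun x : L => br x y)
    (halt : ∀ x : L, br x x = 0)
    (hjac : ∀ x y z : L, br x (br y z) = br (br x y) z + br y (br x z))
    {br' : A' ⊗[A] L → A' ⊗[A] L → A' ⊗[A] L} {an' : A' ⊗[A] L → A' → A'}
    (hb1 : ∀ z w w', br' z (w + w') = br' z w + br' z w')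
    (hb2 : ∀ w z z', br' (z + z') w = br' z w + br' z' w)
    (hbt : ∀ (u : A') (x : L) (v : A') (y : L),
      br' (u ⊗ₜ[A] x) (v ⊗ₜ[A] y) =
        (u * v) ⊗ₜ[A] br x y - (v * ω' y u) ⊗ₜ[A] x + (u * ω' x v) ⊗ₜ[A] y)
    (ha1 : ∀ z z' t, an' (z + z') t = an' z t + an' z' t)
    (hat : ∀ (u : A') (x : L) (t : A'), an' (u ⊗ₜ[A] x) t = u * ω' x t)

section basics

include hb1 in
theorem br'_zero_right (z) : br' z 0 = 0 := by
  have h := hb1 z 0 0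
  rw [add_zero] at h
  have h2 : br' z 0 + 0 = br' z 0 + br' z 0 := by rw [add_zero]; exact h
  exact (add_left_cancel h2).symm

include hb2 in
theorem br'_zero_left (w) : br' 0 w = 0 := by
  have h := hb2 w 0 0
  rw [add_zero] at h
  have h2 : br' 0 w + 0 = br' 0 w + br' 0 w := by rw [add_zero]; exact h
  exact (add_left_cancel h2).symm

include hb1 in
theorem br'_sub_right (z w w') : br' z (w - w') = br' z w - br' z w' := by
  have h := hb1 z w' (w - w')
  rw [add_sub_cancel] at h
  exact eq_sub_of_add_eq (by rw [add_comm]; exact h.symm)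

include hb2 in
theorem br'_sub_left (w z z') : br' (z - z') w = br' z w - br' z' w := by
  have h := hb2 w z' (z - z')
  rw [add_sub_cancel] at h
  exact eq_sub_of_add_eq (by rw [add_comm]; exact h.symm)

include ha1 in
theorem an'_zero_left (t) : an' 0 t = 0 := by
  have h := ha1 0 0 t
  rw [add_zero] at h
  have h2 : an' 0 t + 0 = an' 0 t + an' 0 t := by rw [add_zero]; exact h
  exact (add_left_cancel h2).symm

include ha1 in
theorem an'_sub_left (z z' t) : an' (z - z') t = an' z t - an' z' t := by
  have h := ha1 z' (z - z') t
  rw [add_sub_cancel] at h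
  exact eq_sub_of_add_eq (by rw [add_comm]; exact h.symm)

end basics

include hder hlie hbr1 hbr2 halt hjac hb1 hb2 hbt ha1 hat in
theorem br'_jacobi (p q s : A' ⊗[A] L) :
    br' p (br' q s) = br' (br' p q) s + br' q (br' p s) := by
  have h9' : ∀ a b c : L, br (br a b) c = br a (br b c) - br b (br a c) := by
    intro a b c; rw [hjac a b c]; abel
  induction p using TensorProduct.induction_on with
  | zero =>
      simp only [br'_zero_left hb2, br'_zero_right hb1, zero_add]
  | add p1 p2 hp1 hp2 =>
      simp only [hb2, hb1, hp1, hp2]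
      abel
  | tmul u x =>
    induction q using TensorProduct.induction_on with
    | zero =>
        simp only [br'_zero_left hb2, br'_zero_right hb1, zero_add, add_zero]
    | add q1 q2 hq1 hq2 =>
        simp only [hb2, hb1, hq1, hq2]
        abel
    | tmul v y =>
      induction s using TensorProduct.induction_on with
      | zero =>
          simp only [br'_zero_right hb1, add_zero]
      | add s1 s2 hs1 hs2 =>
          simp only [hb1, hs1, hs2]
          abel
      | tmul w z =>
          simp only [hbt, br'_sub_right hb1, br'_sub_left hb2, hb1, hb2]
          simp only [h9', hlie, hder]
          simp only [mul_sub, sub_mul, mul_add, add_mul, tmul_sub, sub_tmul,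
            tmul_add, add_tmul]
          ring_nf
          rw [br_anti hbr1 hbr2 halt y x]
          simp only [tmul_neg, smul_neg]
          abel
include hder in
theorem om_one (x : L) : ω' x (1 : A') = 0 := by
  have h := hder x 1 1
  rw [mul_one, one_mul, mul_one] at h
  have h2 : ω' x 1 + 0 = ω' x 1 + ω' x 1 := by rw [add_zero]; exact h
  exact (add_left_cancel h2).symm

include hbr1 hbr2 halt hb1 hb2 hbt in
theorem br'_anti (p q : A' ⊗[A] L) : br' p q = - br' q p := by
  induction p using TensorProduct.induction_on with
  | zero => simp only [br'_zero_left hb2, br'_zero_right hb1, neg_zero]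
  | add p1 p2 hp1 hp2 =>
      simp only [hb1, hb2, hp1, hp2]; abel
  | tmul u x =>
    induction q using TensorProduct.induction_on with
    | zero => simp only [br'_zero_left hb2, br'_zero_right hb1, neg_zero]
    | add q1 q2 hq1 hq2 =>
        simp only [hb1, hb2, hq1, hq2]; abel
    | tmul v y =>
        simp only [hbt]
        rw [br_anti hbr1 hbr2 halt y x]
        simp only [tmul_neg]
        ring_nf
        abel

include hbr1 hbr2 halt hb1 hb2 hbt in
theorem br'_alt (p : A' ⊗[A] L) : br' p p = 0 := by
  induction p using TensorProduct.induction_on with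
  | zero => exact br'_zero_left hb2 0
  | tmul u x =>
      simp only [hbt, halt, tmul_zero]
      abel
  | add p1 p2 hp1 hp2 =>
      rw [hb1, hb2, hb2, hp1, hp2, br'_anti hbr1 hbr2 halt hb1 hb2 hbt p2 p1]
      abel

include hlin hb1 hb2 hbt in
theorem br'_smulR_left (r : R) (p q : A' ⊗[A] L) : br' (r • p) q = r • br' p q := by
  induction p using TensorProduct.induction_on with
  | zero => rw [smul_zero, br'_zero_left hb2, smul_zero]
  | add p1 p2 hp1 hp2 => rw [smul_add, hb2, hb2, hp1, hp2, smul_add]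
  | tmul u x =>
    induction q using TensorProduct.induction_on with
    | zero => rw [br'_zero_right hb1, br'_zero_right hb1, smul_zero]
    | add q1 q2 hq1 hq2 => rw [hb1, hb1, hq1, hq2, smul_add]
    | tmul v y =>
        rw [smul_tmul']
        simp only [hbt, (hlin y).map_smul, smul_mul_assoc, mul_smul_comm,
          smul_sub, smul_add, smul_tmul']

include hlin hb1 hb2 hbt in
theorem br'_smulR_right (r : R) (p q : A' ⊗[A] L) : br' p (r • q) = r • br' p q := by
  induction p using TensorProduct.induction_on with
  | zero => rw [br'_zero_left hb2, br'_zero_left hb2, smul_zero]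
  | add p1 p2 hp1 hp2 => rw [hb2, hb2, hp1, hp2, smul_add]
  | tmul u x =>
    induction q using TensorProduct.induction_on with
    | zero => rw [smul_zero, br'_zero_right hb1, smul_zero]
    | add q1 q2 hq1 hq2 => rw [smul_add, hb1, hb1, hq1, hq2, smul_add]
    | tmul v y =>
        rw [smul_tmul']
        simp only [hbt, (hlin x).map_smul, (hlin y).map_smul, smul_mul_assoc,
          mul_smul_comm, smul_sub, smul_add, smul_tmul']

include ha1 hat in
theorem an'_smulR_left (r : R) (p : A' ⊗[A] L) (t : A') :
    an' (r • p) t = r • an' p t := by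
  induction p using TensorProduct.induction_on with
  | zero => rw [smul_zero, an'_zero_left ha1, smul_zero]
  | add p1 p2 hp1 hp2 => rw [smul_add, ha1, ha1, hp1, hp2, smul_add]
  | tmul u x => rw [smul_tmul', hat, hat, smul_mul_assoc]

variable (ha2 : ∀ z t t', an' z (t + t') = an' z t + an' z t')

include hder ha1 hat in
theorem an'_mul (p : A' ⊗[A] L) (t t' : A') :
    an' p (t * t') = an' p t * t' + t * an' p t' := by
  induction p using TensorProduct.induction_on with
  | zero => simp only [an'_zero_left ha1, zero_mul, mul_zero, add_zero]
  | add p1 p2 hp1 hp2 => rw [ha1, ha1, ha1, hp1, hp2]; ring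
  | tmul u x => rw [hat, hat, hat, hder]; ring

include hder hlie hb1 hb2 hbt ha1 hat ha2 in
theorem an'_bracket (p q : A' ⊗[A] L) (t : A') :
    an' (br' p q) t = an' p (an' q t) - an' q (an' p t) := by
  induction p using TensorProduct.induction_on with
  | zero =>
      simp only [br'_zero_left hb2, an'_zero_left ha1]
      have h0 : ∀ z : A' ⊗[A] L, an' z 0 = 0 := by
        intro z
        have h := ha2 z 0 0
        rw [add_zero] at h
        have h2 : an' z 0 + 0 = an' z 0 + an' z 0 := by rw [add_zero]; exact h
        exact (add_left_cancel h2).symm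
      rw [h0, sub_zero]
  | add p1 p2 hp1 hp2 =>
      rw [hb2, ha1, ha1, hp1, hp2, ha1]
      have := ha2 q (an' p1 t) (an' p2 t)
      rw [this]
      ring
  | tmul u x =>
    induction q using TensorProduct.induction_on with
    | zero =>
        simp only [br'_zero_right hb1, an'_zero_left ha1]
        have h := ha2 (u ⊗ₜ[A] x) 0 0
        rw [add_zero] at h
        have h2 : an' (u ⊗ₜ[A] x) 0 + 0 = an' (u ⊗ₜ[A] x) 0 + an' (u ⊗ₜ[A] x) 0 := by
          rw [add_zero]; exact h
        rw [← (add_left_cancel h2)]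
        abel
    | add q1 q2 hq1 hq2 =>
        rw [hb1, ha1, ha1, hq1, hq2, ha1, ha2 (u ⊗ₜ[A] x) (an' q1 t) (an' q2 t)]
        ring
    | tmul v y =>
        rw [hbt, ha1, an'_sub_left ha1]
        simp only [hat, hlie, hder]
        ring

include ha1 hat in
theorem an'_Asmul (c : A') (p : A' ⊗[A] L) (t : A') :
    an' (c • p) t = c * an' p t := by
  induction p using TensorProduct.induction_on with
  | zero => rw [smul_zero, an'_zero_left ha1, mul_zero]
  | add p1 p2 hp1 hp2 => rw [smul_add, ha1, ha1, hp1, hp2, mul_add]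
  | tmul u x =>
      rw [smul_tmul', smul_eq_mul, hat, hat]
      ring

include hder hb1 hb2 hbt ha1 hat in
theorem br'_leib (p q : A' ⊗[A] L) (c : A') :
    br' p (c • q) = c • br' p q + (an' p c) • q := by
  induction p using TensorProduct.induction_on with
  | zero =>
      rw [br'_zero_left hb2, br'_zero_left hb2, an'_zero_left ha1, smul_zero,
        zero_smul, add_zero]
  | add p1 p2 hp1 hp2 =>
      rw [hb2, hb2, hp1, hp2, ha1, add_smul, smul_add]
      abel
  | tmul u x =>
    induction q using TensorProduct.induction_on with
    | zero => simp only [smul_zero, br'_zero_right hb1, add_zero]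
    | add q1 q2 hq1 hq2 =>
        rw [smul_add, hb1, hb1, hq1, hq2, smul_add, smul_add]
        abel
    | tmul v y =>
        rw [smul_tmul', smul_eq_mul, hbt, hbt, hat]
        simp only [smul_sub, smul_add, smul_tmul', smul_eq_mul, hder]
        simp only [mul_add, add_mul, add_tmul, tmul_add]
        ring_nf
        abel

variable (hequiv : ∀ (x : L) (a : A), ω' x (algebraMap A A' a) = algebraMap A A' (an x a))
    (har : ∀ (z : A' ⊗[A] L) (r : R) (t : A'), an' z (r • t) = r • an' z t)

include hlin hlinx hder hlie hbr1 hbr2 halt hjac hb1 hb2 hbt ha1 hat ha2 har in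
theorem main_isLR : IsLR R A' (A' ⊗[A] L) (fun c z => c • z) br' an' :=
  ⟨fun c => ⟨fun z w => smul_add c z w, fun r z => (smul_comm r c z).symm⟩,
    fun z => one_smul A' z,
    fun a b z => mul_smul a b z,
    fun a b z => add_smul a b z,
    fun r a z => smul_assoc r a z,
    fun z => ⟨hb1 z, fun r w => br'_smulR_right hlin hb1 hb2 hbt r z w⟩,
    fun w => ⟨fun z z' => hb2 w z z', fun r z => br'_smulR_left hlin hb1 hb2 hbt r z w⟩,
    fun z => br'_alt hbr1 hbr2 halt hb1 hb2 hbt z,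
    fun p q s => br'_jacobi hder hlie hbr1 hbr2 halt hjac hb1 hb2 hbt ha1 hat p q s,
    fun z => ⟨fun t t' => ha2 z t t', fun r t => har z r t⟩,
    fun t => ⟨fun z z' => ha1 z z' t, fun r z => an'_smulR_left ha1 hat r z t⟩,
    fun z t t' => an'_mul hder ha1 hat z t t',
    fun p q t => an'_bracket hder hlie hb1 hb2 hbt ha1 hat ha2 p q t,
    fun c z t => an'_Asmul ha1 hat c z t,
    fun p c q => br'_leib hder hb1 hb2 hbt ha1 hat p q c⟩

include hder hequiv hbt hat in
theorem main_isLRHom :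
    IsLRHom R (fun (a : A) (x : L) => a • x) br an (fun (c : A') z => c • z) br' an'
      (algebraMap A A') (fun x : L => (1 : A') ⊗ₜ[A] x) := by
  refine ⟨⟨⟨fun a b => map_add (algebraMap A A') a b, ?_⟩,
      map_one (algebraMap A A'), fun a b => map_mul (algebraMap A A') a b⟩,
    ⟨fun x y => tmul_add 1 x y, ?_⟩, ?_, ?_, ?_⟩
  · intro r a
    rw [Algebra.smul_def, map_mul, ← IsScalarTower.algebraMap_apply, ← Algebra.smul_def]
  · intro r x
    show (1 : A') ⊗ₜ[A] (r • x) = r • ((1 : A') ⊗ₜ[A] x)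
    rw [← algebraMap_smul A r x, tmul_smul, algebraMap_smul]
  · intro x y
    show (1 : A') ⊗ₜ[A] br x y = br' ((1 : A') ⊗ₜ[A] x) ((1 : A') ⊗ₜ[A] y)
    rw [hbt, om_one hder x, om_one hder y]
    simp
  · intro a x
    show (1 : A') ⊗ₜ[A] (a • x) = (algebraMap A A' a) • ((1 : A') ⊗ₜ[A] x)
    rw [smul_tmul', ← smul_tmul]
    congr 1
    rw [Algebra.smul_def, smul_eq_mul]
  · intro x a
    show algebraMap A A' (an x a) = an' ((1 : A') ⊗ₜ[A] x) (algebraMap A A' a)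
    rw [hat, hequiv, one_mul]
end Aux4


/-- under the hypotheses of the induced-structure construction,
the pairing `u⊗α⊗v ↦ u·α(v)` descends to an action of `L' = A' ⊗[A] L` on `A'`
by derivations which, together with the induced bracket, makes `L'` an
`(R,A')`-Lie algebra such that `(φ, φ ⊗ Id)` is a morphism of Lie-Rinehart
algebras. -/
theorem stmt3 (R : Type u) [CommRing R] (A : Type v) [CommRing A] [Algebra R A]
    (A' : Type v) [CommRing A'] [Algebra R A'] [Algebra A A'] [IsScalarTower R A A']
    [SMulCommClass A R A']
    (L : Type v) [AddCommGroup L] [Module R L] [Module A L] [IsScalarTower R A L]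
    (br : L → L → L) (an : L → A → A)
    (h : IsLR R A L (fun a x => a • x) br an)
    (ω' : L → A' → A')
    (hlin : ∀ x : L, IsLinearMap R (ω' x))
    (hlinx : ∀ u : A', IsLinearMap R fun x : L => ω' x u)
    (hder : ∀ (x : L) (u v : A'), ω' x (u * v) = ω' x u * v + u * ω' x v)
    (hlie : ∀ (x y : L) (u : A'),
      ω' (br x y) u = ω' x (ω' y u) - ω' y (ω' x u))
    (hequiv : ∀ (x : L) (a : A),
      ω' x (algebraMap A A' a) = algebraMap A A' (an x a))
    (hA : ∀ (a : A) (x : L) (u : A'),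
      ω' (a • x) u = algebraMap A A' a * ω' x u) :
    ∃ (br' : (A' ⊗[A] L) → (A' ⊗[A] L) → (A' ⊗[A] L))
      (an' : (A' ⊗[A] L) → A' → A'),
      (∀ (u v : A') (α β : L),
        br' (u ⊗ₜ[A] α) (v ⊗ₜ[A] β) =
          (u * v) ⊗ₜ[A] br α β - (v * ω' β u) ⊗ₜ[A] α + (u * ω' α v) ⊗ₜ[A] β) ∧
      (∀ (u : A') (α : L) (v : A'), an' (u ⊗ₜ[A] α) v = u * ω' α v) ∧
      IsLR R A' (A' ⊗[A] L) (fun c z => c • z) br' an' ∧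
      IsLRHom R (fun a x => a • x) br an (fun c z => c • z) br' an'
        (algebraMap A A') (fun x : L => (1 : A') ⊗ₜ[A] x) := by
  obtain ⟨h1, h2, h3, h4, h5, hbr1, hbr2, halt, hjac, h10, h11, h12, h13, h14, h15⟩ := h
  have hleib : ∀ (x : L) (a : A) (y : L), br x (a • y) = a • br x y + (an x a) • y :=
    fun x a y => h15 x a y
  -- the induced bracket and anchor
  set Bt := brT (br := br) (an := an) (ω' := ω') hlin hlinx hder hequiv hA hbr1 hbr2 halt hleib
    with hBt
  set At := anT (ω' := ω') hlin hlinx hA with hAt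
  have hb1 : ∀ z w w', Bt z (w + w') = Bt z w + Bt z w' := fun z w w' => (Bt z).map_add w w'
  have hb2 : ∀ w z z', Bt (z + z') w = Bt z w + Bt z' w := by
    intro w z z'; rw [map_add]; rfl
  have hbt : ∀ (u : A') (x : L) (v : A') (y : L),
      Bt (u ⊗ₜ[A] x) (v ⊗ₜ[A] y) =
        (u * v) ⊗ₜ[A] br x y - (v * ω' y u) ⊗ₜ[A] x + (u * ω' x v) ⊗ₜ[A] y := by
    intro u x v y; rw [hBt, brT_tmul]
  have ha1 : ∀ z z' t, At (z + z') t = At z t + At z' t := by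
    intro z z' t; rw [map_add]; rfl
  have ha2 : ∀ z t t', At z (t + t') = At z t + At z t' := fun z t t' => (At z).map_add t t'
  have hat : ∀ (u : A') (x : L) (t : A'), At (u ⊗ₜ[A] x) t = u * ω' x t := by
    intro u x t; rw [hAt, anT_tmul]
  refine ⟨fun z w => Bt z w, fun z t => At z t, ?_, ?_, ?_, ?_⟩
  · intro u v α β
    show Bt (u ⊗ₜ[A] α) (v ⊗ₜ[A] β) = _
    rw [hbt]
  · intro u α v
    exact hat u α v
  · exact main_isLR hlin hlinx hder hlie hbr1 hbr2 halt hjac hb1 hb2 hbt ha1 hat ha2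
      (fun z r t => (At z).map_smul r t)
  · exact main_isLRHom hder hbt hat hequiv
end

section
/- In the crossed product $(R,A)$-Lie algebra $A\odot\mathfrak g$, the Jacobi identity holds: for all $a,b,c\in A$ and $x,y,z\in\mathfrak g$, $[[a\otimes x,b\otimes y],c\otimes z] + [[b\otimes y,c\otimes z],a\otimes x] + [[c\otimes z,a\otimes x],b\otimes y] = 0$. -/
open TensorProduct

universe u v w x y

/-- the Jacobi identity holds for the crossed product bracket on
`A ⊗[R] 𝔤`. -/
theorem stmt5 (R : Type u) [CommRing R] (A : Type v) [CommRing A] [Algebra R A]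
    (g : Type w) [LieRing g] [LieAlgebra R g]
    (ω : g → A → A)
    (hω : ∀ x : g, IsLinearMap R (ω x))
    (hωx : ∀ a : A, IsLinearMap R fun x : g => ω x a)
    (hder : ∀ (x : g) (a b : A), ω x (a * b) = ω x a * b + a * ω x b)
    (hlie : ∀ (x y : g) (a : A), ω ⁅x, y⁆ a = ω x (ω y a) - ω y (ω x a))
    (br : A ⊗[R] g → A ⊗[R] g → A ⊗[R] g)
    (hbl : ∀ z : A ⊗[R] g, IsLinearMap R (br z))
    (hbr : ∀ z : A ⊗[R] g, IsLinearMap R fun w : A ⊗[R] g => br w z)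
    (hform : ∀ (a b : A) (x y : g),
      br (a ⊗ₜ[R] x) (b ⊗ₜ[R] y) =
        (a * b) ⊗ₜ[R] ⁅x, y⁆ + (a * ω x b) ⊗ₜ[R] y - (b * ω y a) ⊗ₜ[R] x) :
    ∀ (a b c : A) (x y z : g),
      br (br (a ⊗ₜ[R] x) (b ⊗ₜ[R] y)) (c ⊗ₜ[R] z) +
        br (br (b ⊗ₜ[R] y) (c ⊗ₜ[R] z)) (a ⊗ₜ[R] x) +
        br (br (c ⊗ₜ[R] z) (a ⊗ₜ[R] x)) (b ⊗ₜ[R] y) = 0 := by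
  intro a b c x y z
  have hadd : ∀ w u v : A ⊗[R] g, br (u + v) w = br u w + br v w :=
    fun w u v => (hbr w).map_add u v
  have hsub : ∀ w u v : A ⊗[R] g, br (u - v) w = br u w - br v w :=
    fun w u v => (hbr w).map_sub u v
  have hj : (⁅z, ⁅x, y⁆⁆ : g) = -(⁅x, ⁅y, z⁆⁆ + ⁅y, ⁅z, x⁆⁆) :=
    eq_neg_of_add_eq_zero_left (by rw [add_comm]; exact lie_jacobi x y z)
  have hyx : (⁅y, x⁆ : g) = -⁅x, y⁆ := by rw [← lie_skew]
  have hzy : (⁅z, y⁆ : g) = -⁅y, z⁆ := by rw [← lie_skew]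
  have hxz : (⁅x, z⁆ : g) = -⁅z, x⁆ := by rw [← lie_skew]
  rw [hform a b x y, hform b c y z, hform c a z x, hsub, hadd, hsub, hadd, hsub, hadd]
  simp only [hform, hlie, hder, lie_lie, hyx, hzy, hxz, hj, lie_neg, neg_lie, neg_neg,
    tmul_neg, neg_tmul, tmul_sub, sub_tmul, tmul_add, add_tmul,
    mul_sub, sub_mul, mul_add, add_mul, mul_neg, neg_mul]
  ring_nf
  abel
end

section
/- Let $(A,L)$ and $(A',L')$ be Lie-Rinehart algebras over $R$. Then the $R$-module $L\otimes A'\oplus A\otimes L'$ carries a natural $(R,A\otimes A')$-Lie algebra structure, with $A\otimes A'$-module structure given componentwise, bracket $[(\alpha\otimes a', a\otimes \alpha'),(\beta\otimes b', b\otimes\beta')]$ determined by the brackets and anchors of $L$ and $L'$, and anchor acting on $A\otimes A'$ via $(\alpha\otimes a')(b\otimes b') = \alpha(b)\otimes a'b'$ and $(a\otimes\alpha')(b\otimes b') = ab\otimes \alpha'(b')$. -/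
open TensorProduct

universe u v w x y

section Aux11

namespace LR11

variable {R : Type u} [CommRing R] {A : Type v} [CommRing A] [Algebra R A]
  {L : Type v} [AddCommGroup L] [Module R L]
  {sm : A → L → L} {br : L → L → L} {an : L → A → A}

theorem c1 (h : IsLR R A L sm br an) : ∀ a, IsLinearMap R (sm a) := by
  obtain ⟨p1,p2,p3,p4,p5,p6,p7,p8,p9,p10,p11,p12,p13,p14,p15⟩ := h; exact p1
theorem c2 (h : IsLR R A L sm br an) : ∀ x, sm 1 x = x := by
  obtain ⟨p1,p2,p3,p4,p5,p6,p7,p8,p9,p10,p11,p12,p13,p14,p15⟩ := h; exact p2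
theorem c3 (h : IsLR R A L sm br an) : ∀ a b x, sm (a * b) x = sm a (sm b x) := by
  obtain ⟨p1,p2,p3,p4,p5,p6,p7,p8,p9,p10,p11,p12,p13,p14,p15⟩ := h; exact p3
theorem c4 (h : IsLR R A L sm br an) : ∀ a b x, sm (a + b) x = sm a x + sm b x := by
  obtain ⟨p1,p2,p3,p4,p5,p6,p7,p8,p9,p10,p11,p12,p13,p14,p15⟩ := h; exact p4
theorem c5 (h : IsLR R A L sm br an) : ∀ (r : R) a x, sm (r • a) x = r • sm a x := by
  obtain ⟨p1,p2,p3,p4,p5,p6,p7,p8,p9,p10,p11,p12,p13,p14,p15⟩ := h; exact p5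
theorem c6 (h : IsLR R A L sm br an) : ∀ x, IsLinearMap R (br x) := by
  obtain ⟨p1,p2,p3,p4,p5,p6,p7,p8,p9,p10,p11,p12,p13,p14,p15⟩ := h; exact p6
theorem c7 (h : IsLR R A L sm br an) : ∀ y, IsLinearMap R fun x : L => br x y := by
  obtain ⟨p1,p2,p3,p4,p5,p6,p7,p8,p9,p10,p11,p12,p13,p14,p15⟩ := h; exact p7
theorem c8 (h : IsLR R A L sm br an) : ∀ x, br x x = 0 := by
  obtain ⟨p1,p2,p3,p4,p5,p6,p7,p8,p9,p10,p11,p12,p13,p14,p15⟩ := h; exact p8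
theorem c9 (h : IsLR R A L sm br an) :
    ∀ x y z, br x (br y z) = br (br x y) z + br y (br x z) := by
  obtain ⟨p1,p2,p3,p4,p5,p6,p7,p8,p9,p10,p11,p12,p13,p14,p15⟩ := h; exact p9
theorem c10 (h : IsLR R A L sm br an) : ∀ x, IsLinearMap R (an x) := by
  obtain ⟨p1,p2,p3,p4,p5,p6,p7,p8,p9,p10,p11,p12,p13,p14,p15⟩ := h; exact p10
theorem c11 (h : IsLR R A L sm br an) : ∀ a, IsLinearMap R fun x : L => an x a := by
  obtain ⟨p1,p2,p3,p4,p5,p6,p7,p8,p9,p10,p11,p12,p13,p14,p15⟩ := h; exact p11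
theorem c12 (h : IsLR R A L sm br an) :
    ∀ x a b, an x (a * b) = an x a * b + a * an x b := by
  obtain ⟨p1,p2,p3,p4,p5,p6,p7,p8,p9,p10,p11,p12,p13,p14,p15⟩ := h; exact p12
theorem c13 (h : IsLR R A L sm br an) :
    ∀ x y a, an (br x y) a = an x (an y a) - an y (an x a) := by
  obtain ⟨p1,p2,p3,p4,p5,p6,p7,p8,p9,p10,p11,p12,p13,p14,p15⟩ := h; exact p13
theorem c14 (h : IsLR R A L sm br an) : ∀ a x b, an (sm a x) b = a * an x b := by
  obtain ⟨p1,p2,p3,p4,p5,p6,p7,p8,p9,p10,p11,p12,p13,p14,p15⟩ := h; exact p14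
theorem c15 (h : IsLR R A L sm br an) :
    ∀ x a y, br x (sm a y) = sm a (br x y) + sm (an x a) y := by
  obtain ⟨p1,p2,p3,p4,p5,p6,p7,p8,p9,p10,p11,p12,p13,p14,p15⟩ := h; exact p15

/-- bundled scalar action -/
def smL (h : IsLR R A L sm br an) : A →ₗ[R] L →ₗ[R] L :=
  LinearMap.mk₂ R sm (c4 h) (c5 h) (fun a x y => (c1 h a).map_add x y)
    (fun c a x => (c1 h a).map_smul c x)

@[simp] theorem smL_apply (h : IsLR R A L sm br an) (a : A) (x : L) :
    smL h a x = sm a x := rfl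

/-- bundled bracket -/
def brL (h : IsLR R A L sm br an) : L →ₗ[R] L →ₗ[R] L :=
  LinearMap.mk₂ R br (fun x y z => (c7 h z).map_add x y) (fun c x y => (c7 h y).map_smul c x)
    (fun x y z => (c6 h x).map_add y z) (fun c x y => (c6 h x).map_smul c y)

@[simp] theorem brL_apply (h : IsLR R A L sm br an) (x y : L) :
    brL h x y = br x y := rfl

/-- bundled anchor -/
def anL (h : IsLR R A L sm br an) : L →ₗ[R] A →ₗ[R] A :=
  LinearMap.mk₂ R an (fun x y a => (c11 h a).map_add x y) (fun c x a => (c11 h a).map_smul c x)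
    (fun x a b => (c10 h x).map_add a b) (fun c x a => (c10 h x).map_smul c a)

@[simp] theorem anL_apply (h : IsLR R A L sm br an) (x : L) (a : A) :
    anL h x a = an x a := rfl

theorem br_anti (h : IsLR R A L sm br an) (x y : L) : br x y = -br y x := by
  have e : br (x + y) (x + y) = 0 := c8 h _
  rw [(c6 h _).map_add, (c7 h x).map_add, (c7 h y).map_add, c8 h, c8 h, zero_add, add_zero] at e
  have e2 : br x y + br y x = 0 := by rw [add_comm]; exact e
  exact eq_neg_of_add_eq_zero_left e2

theorem c15l (h : IsLR R A L sm br an) (a : A) (x y : L) :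
    br (sm a x) y = sm a (br x y) - sm (an y a) x := by
  rw [br_anti h (sm a x) y, c15 h y a x, br_anti h y x, (c1 h a).map_neg]
  abel

theorem an_one (h : IsLR R A L sm br an) (x : L) : an x 1 = 0 := by
  have e : an x 1 = an x 1 + an x 1 := by
    have := c12 h x 1 1; simpa using this
  exact right_eq_add.mp e

end LR11

end Aux11

section Aux11b

namespace LR11

variable {R : Type u} [CommRing R] {A : Type v} [CommRing A] [Algebra R A]
  {A' : Type v} [CommRing A'] [Algebra R A']
  {L : Type v} [AddCommGroup L] [Module R L]
  {L' : Type v} [AddCommGroup L'] [Module R L']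
  {sm : A → L → L} {br : L → L → L} {an : L → A → A}
  {sm' : A' → L' → L'} {br' : L' → L' → L'} {an' : L' → A' → A'}

noncomputable def SM1 (h : IsLR R A L sm br an) (h' : IsLR R A' L' sm' br' an') :
    A ⊗[R] A' →ₗ[R] L ⊗[R] A' →ₗ[R] L ⊗[R] A' :=
  TensorProduct.map₂ (smL h) (LinearMap.mul R A')

noncomputable def SM2 (h : IsLR R A L sm br an) (h' : IsLR R A' L' sm' br' an') :
    A ⊗[R] A' →ₗ[R] A ⊗[R] L' →ₗ[R] A ⊗[R] L' :=
  TensorProduct.map₂ (LinearMap.mul R A) (smL h')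

noncomputable def BR11 (h : IsLR R A L sm br an) (h' : IsLR R A' L' sm' br' an') :
    L ⊗[R] A' →ₗ[R] L ⊗[R] A' →ₗ[R] L ⊗[R] A' :=
  TensorProduct.map₂ (brL h) (LinearMap.mul R A')

noncomputable def BR12a (h : IsLR R A L sm br an) (h' : IsLR R A' L' sm' br' an') :
    L ⊗[R] A' →ₗ[R] A ⊗[R] L' →ₗ[R] L ⊗[R] A' :=
  TensorProduct.map₂ (smL h).flip (anL h').flip

noncomputable def BR12b (h : IsLR R A L sm br an) (h' : IsLR R A' L' sm' br' an') :
    L ⊗[R] A' →ₗ[R] A ⊗[R] L' →ₗ[R] A ⊗[R] L' :=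
  TensorProduct.map₂ (anL h) (smL h')

noncomputable def BR22 (h : IsLR R A L sm br an) (h' : IsLR R A' L' sm' br' an') :
    A ⊗[R] L' →ₗ[R] A ⊗[R] L' →ₗ[R] A ⊗[R] L' :=
  TensorProduct.map₂ (LinearMap.mul R A) (brL h')

noncomputable def AN1 (h : IsLR R A L sm br an) (h' : IsLR R A' L' sm' br' an') :
    L ⊗[R] A' →ₗ[R] A ⊗[R] A' →ₗ[R] A ⊗[R] A' :=
  TensorProduct.map₂ (anL h) (LinearMap.mul R A')

noncomputable def AN2 (h : IsLR R A L sm br an) (h' : IsLR R A' L' sm' br' an') :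
    A ⊗[R] L' →ₗ[R] A ⊗[R] A' →ₗ[R] A ⊗[R] A' :=
  TensorProduct.map₂ (LinearMap.mul R A) (anL h')

variable (h : IsLR R A L sm br an) (h' : IsLR R A' L' sm' br' an')

@[simp] theorem SM1_tmul (a : A) (a' : A') (α : L) (c' : A') :
    SM1 h h' (a ⊗ₜ[R] a') (α ⊗ₜ[R] c') = sm a α ⊗ₜ[R] (a' * c') := by
  simp [SM1]

@[simp] theorem SM2_tmul (a : A) (a' : A') (c : A) (α' : L') :
    SM2 h h' (a ⊗ₜ[R] a') (c ⊗ₜ[R] α') = (a * c) ⊗ₜ[R] sm' a' α' := by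
  simp [SM2]

@[simp] theorem BR11_tmul (α β : L) (a' b' : A') :
    BR11 h h' (α ⊗ₜ[R] a') (β ⊗ₜ[R] b') = br α β ⊗ₜ[R] (a' * b') := by
  simp [BR11]

@[simp] theorem BR12a_tmul (α : L) (a' : A') (b : A) (β' : L') :
    BR12a h h' (α ⊗ₜ[R] a') (b ⊗ₜ[R] β') = sm b α ⊗ₜ[R] an' β' a' := by
  simp [BR12a]

@[simp] theorem BR12b_tmul (α : L) (a' : A') (b : A) (β' : L') :
    BR12b h h' (α ⊗ₜ[R] a') (b ⊗ₜ[R] β') = an α b ⊗ₜ[R] sm' a' β' := by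
  simp [BR12b]

@[simp] theorem BR22_tmul (a b : A) (α' β' : L') :
    BR22 h h' (a ⊗ₜ[R] α') (b ⊗ₜ[R] β') = (a * b) ⊗ₜ[R] br' α' β' := by
  simp [BR22]

@[simp] theorem AN1_tmul (α : L) (a' : A') (b : A) (b' : A') :
    AN1 h h' (α ⊗ₜ[R] a') (b ⊗ₜ[R] b') = an α b ⊗ₜ[R] (a' * b') := by
  simp [AN1]

@[simp] theorem AN2_tmul (a : A) (α' : L') (b : A) (b' : A') :
    AN2 h h' (a ⊗ₜ[R] α') (b ⊗ₜ[R] b') = (a * b) ⊗ₜ[R] an' α' b' := by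
  simp [AN2]

/-- the action map -/
noncomputable def SMF : A ⊗[R] A' → (L ⊗[R] A') × (A ⊗[R] L') → (L ⊗[R] A') × (A ⊗[R] L') :=
  fun t p => (SM1 h h' t p.1, SM2 h h' t p.2)

/-- the bracket -/
noncomputable def BRF : (L ⊗[R] A') × (A ⊗[R] L') → (L ⊗[R] A') × (A ⊗[R] L') →
    (L ⊗[R] A') × (A ⊗[R] L') :=
  fun p q =>
    (BR11 h h' p.1 q.1 - BR12a h h' p.1 q.2 + BR12a h h' q.1 p.2,
     BR22 h h' p.2 q.2 + BR12b h h' p.1 q.2 - BR12b h h' q.1 p.2)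

/-- the anchor -/
noncomputable def ANF : (L ⊗[R] A') × (A ⊗[R] L') → A ⊗[R] A' → A ⊗[R] A' :=
  fun p t => AN1 h h' p.1 t + AN2 h h' p.2 t

/-- induction principle for the direct sum -/
theorem P_ind {C : (L ⊗[R] A') × (A ⊗[R] L') → Prop}
    (p : (L ⊗[R] A') × (A ⊗[R] L')) (h0 : C 0)
    (hL : ∀ (α : L) (a' : A'), C (α ⊗ₜ[R] a', 0))
    (hA : ∀ (a : A) (α' : L'), C (0, a ⊗ₜ[R] α'))
    (hadd : ∀ p q, C p → C q → C (p + q)) : C p := by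
  obtain ⟨u, v⟩ := p
  have h1 : ∀ u : L ⊗[R] A', C (u, 0) := by
    intro u
    induction u using TensorProduct.induction_on with
    | zero => exact h0
    | tmul α a' => exact hL α a'
    | add x y hx hy => simpa using hadd _ _ hx hy
  have h2 : ∀ v : A ⊗[R] L', C (0, v) := by
    intro v
    induction v using TensorProduct.induction_on with
    | zero => exact h0
    | tmul a α' => exact hA a α'
    | add x y hx hy => simpa using hadd _ _ hx hy
  have e : (u, v) = ((u, (0 : A ⊗[R] L')) + ((0 : L ⊗[R] A'), v)) := by simp
  rw [e]
  exact hadd _ _ (h1 u) (h2 v)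

-- bracket table
theorem BRF_11 (α β : L) (a' b' : A') :
    BRF h h' (α ⊗ₜ[R] a', 0) (β ⊗ₜ[R] b', 0) = (br α β ⊗ₜ[R] (a' * b'), 0) := by
  simp [BRF]

theorem BRF_12 (α : L) (a' : A') (b : A) (β' : L') :
    BRF h h' (α ⊗ₜ[R] a', 0) (0, b ⊗ₜ[R] β') =
      (-(sm b α ⊗ₜ[R] an' β' a'), an α b ⊗ₜ[R] sm' a' β') := by
  simp [BRF]

theorem BRF_21 (a : A) (α' : L') (β : L) (b' : A') :
    BRF h h' (0, a ⊗ₜ[R] α') (β ⊗ₜ[R] b', 0) =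
      (sm a β ⊗ₜ[R] an' α' b', -(an β a ⊗ₜ[R] sm' b' α')) := by
  simp [BRF]

theorem BRF_22 (a : A) (α' : L') (b : A) (β' : L') :
    BRF h h' (0, a ⊗ₜ[R] α') (0, b ⊗ₜ[R] β') = (0, (a * b) ⊗ₜ[R] br' α' β') := by
  simp [BRF]

-- additivity lemmas
theorem BRF_add_left (p q r : (L ⊗[R] A') × (A ⊗[R] L')) :
    BRF h h' (p + q) r = BRF h h' p r + BRF h h' q r := by
  simp only [BRF, Prod.fst_add, Prod.snd_add, map_add, LinearMap.add_apply,
    Prod.mk_add_mk, Prod.mk.injEq]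
  constructor <;> abel

theorem BRF_add_right (p q r : (L ⊗[R] A') × (A ⊗[R] L')) :
    BRF h h' p (q + r) = BRF h h' p q + BRF h h' p r := by
  simp only [BRF, Prod.fst_add, Prod.snd_add, map_add, LinearMap.add_apply,
    Prod.mk_add_mk, Prod.mk.injEq]
  constructor <;> abel

@[simp] theorem BRF_zero_left (r : (L ⊗[R] A') × (A ⊗[R] L')) :
    BRF h h' 0 r = 0 := by
  simp [BRF, Prod.ext_iff]

@[simp] theorem BRF_zero_right (r : (L ⊗[R] A') × (A ⊗[R] L')) :
    BRF h h' r 0 = 0 := by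
  simp [BRF, Prod.ext_iff]

theorem ANF_add_left (p q : (L ⊗[R] A') × (A ⊗[R] L')) (t : A ⊗[R] A') :
    ANF h h' (p + q) t = ANF h h' p t + ANF h h' q t := by
  simp only [ANF, Prod.fst_add, Prod.snd_add, map_add, LinearMap.add_apply]
  abel

@[simp] theorem ANF_zero_left (t : A ⊗[R] A') : ANF h h' 0 t = 0 := by
  simp [ANF]

theorem SMF_add_right (t : A ⊗[R] A') (p q : (L ⊗[R] A') × (A ⊗[R] L')) :
    SMF h h' t (p + q) = SMF h h' t p + SMF h h' t q := by
  simp [SMF, Prod.ext_iff]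

@[simp] theorem SMF_zero_right (t : A ⊗[R] A') : SMF h h' t 0 = 0 := by
  simp [SMF, Prod.ext_iff]

theorem SMF_add_left (t s : A ⊗[R] A') (p : (L ⊗[R] A') × (A ⊗[R] L')) :
    SMF h h' (t + s) p = SMF h h' t p + SMF h h' s p := by
  simp [SMF, Prod.ext_iff]

@[simp] theorem SMF_zero_left (p : (L ⊗[R] A') × (A ⊗[R] L')) :
    SMF h h' 0 p = 0 := by
  simp [SMF, Prod.ext_iff]

end LR11

end Aux11b

section Aux11c

namespace LR11

variable {R : Type u} [CommRing R] {A : Type v} [CommRing A] [Algebra R A]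
  {A' : Type v} [CommRing A'] [Algebra R A']
  {L : Type v} [AddCommGroup L] [Module R L]
  {L' : Type v} [AddCommGroup L'] [Module R L']
  {sm : A → L → L} {br : L → L → L} {an : L → A → A}
  {sm' : A' → L' → L'} {br' : L' → L' → L'} {an' : L' → A' → A'}
  (h : IsLR R A L sm br an) (h' : IsLR R A' L' sm' br' an')

theorem SM1_one (u : L ⊗[R] A') : SM1 h h' 1 u = u := by
  rw [Algebra.TensorProduct.one_def]
  induction u using TensorProduct.induction_on with
  | zero => simp
  | tmul α c' => simp [c2 h]
  | add x y hx hy => rw [map_add, hx, hy]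

theorem SM2_one (v : A ⊗[R] L') : SM2 h h' 1 v = v := by
  rw [Algebra.TensorProduct.one_def]
  induction v using TensorProduct.induction_on with
  | zero => simp
  | tmul c α' => simp [c2 h']
  | add x y hx hy => rw [map_add, hx, hy]

theorem SM1_mul (t s : A ⊗[R] A') (u : L ⊗[R] A') :
    SM1 h h' (t * s) u = SM1 h h' t (SM1 h h' s u) := by
  suffices hh : SM1 h h' (t * s) = (SM1 h h' t).comp (SM1 h h' s) by
    rw [hh]; rfl
  induction t using TensorProduct.induction_on with
  | zero => simp
  | add x y hx hy => simp [add_mul, hx, hy, LinearMap.add_comp]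
  | tmul a a' =>
    induction s using TensorProduct.induction_on with
    | zero => simp
    | add x y hx hy => simp [mul_add, hx, hy, LinearMap.comp_add]
    | tmul b b' =>
      apply TensorProduct.ext'
      intro α c'
      simp [Algebra.TensorProduct.tmul_mul_tmul, c3 h, mul_assoc]

theorem SM2_mul (t s : A ⊗[R] A') (v : A ⊗[R] L') :
    SM2 h h' (t * s) v = SM2 h h' t (SM2 h h' s v) := by
  suffices hh : SM2 h h' (t * s) = (SM2 h h' t).comp (SM2 h h' s) by
    rw [hh]; rfl
  induction t using TensorProduct.induction_on with
  | zero => simp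
  | add x y hx hy => simp [add_mul, hx, hy, LinearMap.add_comp]
  | tmul a a' =>
    induction s using TensorProduct.induction_on with
    | zero => simp
    | add x y hx hy => simp [mul_add, hx, hy, LinearMap.comp_add]
    | tmul b b' =>
      apply TensorProduct.ext'
      intro c α'
      simp [Algebra.TensorProduct.tmul_mul_tmul, c3 h', mul_assoc]

theorem BR11_anti (u w : L ⊗[R] A') : BR11 h h' u w = -BR11 h h' w u := by
  induction u using TensorProduct.induction_on with
  | zero => simp
  | add x y hx hy => simp [map_add, hx, hy]; abel
  | tmul α a' =>
    induction w using TensorProduct.induction_on with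
    | zero => simp
    | add x y hx hy => simp [map_add, hx, hy]; abel
    | tmul β b' =>
      simp only [BR11_tmul]
      rw [br_anti h α β, mul_comm, neg_tmul]

theorem BR11_self (u : L ⊗[R] A') : BR11 h h' u u = 0 := by
  induction u using TensorProduct.induction_on with
  | zero => simp
  | tmul α a' => simp [c8 h]
  | add x y hx hy =>
    simp only [map_add, LinearMap.add_apply, hx, hy]
    rw [BR11_anti h h' x y]
    abel

theorem BR22_anti (u w : A ⊗[R] L') : BR22 h h' u w = -BR22 h h' w u := by
  induction u using TensorProduct.induction_on with
  | zero => simp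
  | add x y hx hy => simp [map_add, hx, hy]; abel
  | tmul a α' =>
    induction w using TensorProduct.induction_on with
    | zero => simp
    | add x y hx hy => simp [map_add, hx, hy]; abel
    | tmul b β' =>
      simp only [BR22_tmul]
      rw [br_anti h' α' β', mul_comm, tmul_neg]

theorem BR22_self (u : A ⊗[R] L') : BR22 h h' u u = 0 := by
  induction u using TensorProduct.induction_on with
  | zero => simp
  | tmul a α' => simp [c8 h']
  | add x y hx hy =>
    simp only [map_add, LinearMap.add_apply, hx, hy]
    rw [BR22_anti h h' x y]
    abel

theorem BRF_self (p : (L ⊗[R] A') × (A ⊗[R] L')) : BRF h h' p p = 0 := by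
  simp [BRF, BR11_self h h', BR22_self h h', Prod.ext_iff]

end LR11

end Aux11c

section Aux11d

namespace LR11

variable {R : Type u} [CommRing R] {A : Type v} [CommRing A] [Algebra R A]
  {A' : Type v} [CommRing A'] [Algebra R A']
  {L : Type v} [AddCommGroup L] [Module R L]
  {L' : Type v} [AddCommGroup L'] [Module R L']
  {sm : A → L → L} {br : L → L → L} {an : L → A → A}
  {sm' : A' → L' → L'} {br' : L' → L' → L'} {an' : L' → A' → A'}
  (h : IsLR R A L sm br an) (h' : IsLR R A' L' sm' br' an')

theorem ANF_add_right (p : (L ⊗[R] A') × (A ⊗[R] L')) (s t : A ⊗[R] A') :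
    ANF h h' p (s + t) = ANF h h' p s + ANF h h' p t := by
  simp only [ANF, map_add]; abel

@[simp] theorem ANF_zero_right (p : (L ⊗[R] A') × (A ⊗[R] L')) :
    ANF h h' p 0 = 0 := by
  simp [ANF]

theorem AN1_der (u : L ⊗[R] A') (s t : A ⊗[R] A') :
    AN1 h h' u (s * t) = AN1 h h' u s * t + s * AN1 h h' u t := by
  induction u using TensorProduct.induction_on with
  | zero => simp
  | add x y hx hy =>
    simp only [map_add, LinearMap.add_apply, hx, hy, add_mul, mul_add]
    abel
  | tmul α a' =>
    induction s using TensorProduct.induction_on with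
    | zero => simp
    | add x y hx hy =>
      simp only [add_mul, mul_add, map_add, hx, hy, LinearMap.add_apply]
      abel
    | tmul b b' =>
      induction t using TensorProduct.induction_on with
      | zero => simp
      | add x y hx hy =>
        simp only [add_mul, mul_add, map_add, hx, hy, LinearMap.add_apply]
        abel
      | tmul c c' =>
        simp only [Algebra.TensorProduct.tmul_mul_tmul, AN1_tmul, c12 h,
          c12 h', add_tmul, tmul_add, add_mul, mul_add]
        simp [mul_comm, mul_left_comm, mul_assoc]

theorem AN2_der (v : A ⊗[R] L') (s t : A ⊗[R] A') :
    AN2 h h' v (s * t) = AN2 h h' v s * t + s * AN2 h h' v t := by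
  induction v using TensorProduct.induction_on with
  | zero => simp
  | add x y hx hy =>
    simp only [map_add, LinearMap.add_apply, hx, hy, add_mul, mul_add]
    abel
  | tmul a α' =>
    induction s using TensorProduct.induction_on with
    | zero => simp
    | add x y hx hy =>
      simp only [add_mul, mul_add, map_add, hx, hy, LinearMap.add_apply]
      abel
    | tmul b b' =>
      induction t using TensorProduct.induction_on with
      | zero => simp
      | add x y hx hy =>
        simp only [add_mul, mul_add, map_add, hx, hy, LinearMap.add_apply]
        abel
      | tmul c c' =>
        simp only [Algebra.TensorProduct.tmul_mul_tmul, AN2_tmul, c12 h,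
          c12 h', add_tmul, tmul_add, add_mul, mul_add]
        simp [mul_comm, mul_left_comm, mul_assoc]

theorem AN_der (p : (L ⊗[R] A') × (A ⊗[R] L')) (s t : A ⊗[R] A') :
    ANF h h' p (s * t) = ANF h h' p s * t + s * ANF h h' p t := by
  simp only [ANF, AN1_der h h', AN2_der h h', add_mul, mul_add]
  abel

theorem AN_SM (t : A ⊗[R] A') (p : (L ⊗[R] A') × (A ⊗[R] L')) (s : A ⊗[R] A') :
    ANF h h' (SMF h h' t p) s = t * ANF h h' p s := by
  induction t using TensorProduct.induction_on with
  | zero => simp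
  | add x y hx hy =>
    simp only [SMF_add_left, ANF_add_left, hx, hy, add_mul]
  | tmul a a' =>
    induction p using P_ind with
    | h0 => simp
    | hadd p q hp hq =>
      simp only [SMF_add_right, ANF_add_left, hp, hq, mul_add]
    | hL α e' =>
      induction s using TensorProduct.induction_on with
      | zero => simp
      | add x y hx hy =>
        simp only [ANF_add_right, hx, hy, mul_add]
      | tmul b b' =>
        simp only [SMF, ANF, AN1_tmul, AN2_tmul, SM1_tmul, SM2_tmul,
          Algebra.TensorProduct.tmul_mul_tmul, map_zero, LinearMap.zero_apply,
          add_zero, zero_add, c14 h, tmul_zero, zero_tmul]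
        simp [mul_comm, mul_left_comm, mul_assoc]
    | hA e α' =>
      induction s using TensorProduct.induction_on with
      | zero => simp
      | add x y hx hy =>
        simp only [ANF_add_right, hx, hy, mul_add]
      | tmul b b' =>
        simp only [SMF, ANF, AN1_tmul, AN2_tmul, SM1_tmul, SM2_tmul,
          Algebra.TensorProduct.tmul_mul_tmul, map_zero, LinearMap.zero_apply,
          add_zero, zero_add, c14 h', tmul_zero, zero_tmul]
        simp [mul_comm, mul_left_comm, mul_assoc]

theorem AN_BR (p q : (L ⊗[R] A') × (A ⊗[R] L')) (t : A ⊗[R] A') :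
    ANF h h' (BRF h h' p q) t = ANF h h' p (ANF h h' q t) - ANF h h' q (ANF h h' p t) := by
  induction p using P_ind with
  | h0 => simp
  | hadd p1 p2 hp1 hp2 =>
    simp only [BRF_add_left, ANF_add_left, hp1, hp2, ANF_add_right]
    abel
  | hL α a' =>
    induction q using P_ind with
    | h0 => simp
    | hadd q1 q2 hq1 hq2 =>
      simp only [BRF_add_right, ANF_add_left, hq1, hq2, ANF_add_right]
      abel
    | hL β b' =>
      induction t using TensorProduct.induction_on with
      | zero => simp
      | add x y hx hy =>
        simp only [ANF_add_right, hx, hy]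
        abel
      | tmul c c' =>
        rw [BRF_11]
        simp only [ANF, AN1_tmul, AN2_tmul, map_zero, LinearMap.zero_apply,
          add_zero, zero_add, c13 h, sub_tmul, tmul_sub]
        simp [mul_comm, mul_left_comm, mul_assoc]
    | hA b β' =>
      induction t using TensorProduct.induction_on with
      | zero => simp
      | add x y hx hy =>
        simp only [ANF_add_right, hx, hy]
        abel
      | tmul c c' =>
        rw [BRF_12]
        simp only [ANF, map_zero, LinearMap.zero_apply, add_zero, zero_add,
          map_neg, LinearMap.neg_apply, AN1_tmul, AN2_tmul, c14 h, c14 h',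
          c12 h, c12 h', add_tmul, tmul_add, add_mul, mul_add]
        simp [mul_comm, mul_left_comm, mul_assoc]
        abel
  | hA a α' =>
    induction q using P_ind with
    | h0 => simp
    | hadd q1 q2 hq1 hq2 =>
      simp only [BRF_add_right, ANF_add_left, hq1, hq2, ANF_add_right]
      abel
    | hL β b' =>
      induction t using TensorProduct.induction_on with
      | zero => simp
      | add x y hx hy =>
        simp only [ANF_add_right, hx, hy]
        abel
      | tmul c c' =>
        rw [BRF_21]
        simp only [ANF, map_zero, LinearMap.zero_apply, add_zero, zero_add,
          map_neg, LinearMap.neg_apply, AN1_tmul, AN2_tmul, c14 h, c14 h',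
          c12 h, c12 h', add_tmul, tmul_add, add_mul, mul_add]
        simp [mul_comm, mul_left_comm, mul_assoc]
        abel
    | hA b β' =>
      induction t using TensorProduct.induction_on with
      | zero => simp
      | add x y hx hy =>
        simp only [ANF_add_right, hx, hy]
        abel
      | tmul c c' =>
        rw [BRF_22]
        simp only [ANF, AN1_tmul, AN2_tmul, map_zero, LinearMap.zero_apply,
          add_zero, zero_add, c13 h', sub_tmul, tmul_sub]
        simp [mul_comm, mul_left_comm, mul_assoc]

theorem BR_SM (p : (L ⊗[R] A') × (A ⊗[R] L')) (t : A ⊗[R] A')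
    (q : (L ⊗[R] A') × (A ⊗[R] L')) :
    BRF h h' p (SMF h h' t q) =
      SMF h h' t (BRF h h' p q) + SMF h h' (ANF h h' p t) q := by
  induction p using P_ind with
  | h0 => simp
  | hadd p1 p2 hp1 hp2 =>
    simp only [BRF_add_left, hp1, hp2, ANF_add_left, SMF_add_right, SMF_add_left]
    abel
  | hL α a' =>
    induction q using P_ind with
    | h0 => simp
    | hadd q1 q2 hq1 hq2 =>
      simp only [SMF_add_right, BRF_add_right, hq1, hq2]
      abel
    | hL β b' =>
      induction t using TensorProduct.induction_on with
      | zero => simp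
      | add x y hx hy =>
        simp only [SMF_add_left, BRF_add_right, ANF_add_right, hx, hy]
        abel
      | tmul c c' =>
        simp only [SMF, ANF, BRF, SM1_tmul, SM2_tmul, AN1_tmul, AN2_tmul,
          BR11_tmul, BR12a_tmul, BR12b_tmul, BR22_tmul,
          map_zero, LinearMap.zero_apply, map_add, LinearMap.add_apply,
          map_neg, LinearMap.neg_apply, map_sub, LinearMap.sub_apply,
          Prod.fst_add, Prod.snd_add, add_zero, zero_add, sub_zero, zero_sub,
          neg_zero, tmul_zero, zero_tmul, neg_neg, Prod.mk_add_mk, Prod.mk.injEq]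
        simp only [c15 h, c15 h', c15l h, c15l h', c13 h, c13 h', c12 h,
          c12 h', c14 h, c14 h']
        refine ⟨?_, ?_⟩ <;>
        · simp only [← c3 h, ← c3 h', add_tmul, tmul_add, sub_tmul, tmul_sub,
            neg_tmul, tmul_neg, neg_neg, smul_neg, Prod.mk_add_mk, Prod.mk.injEq,
            mul_comm, mul_left_comm, mul_assoc]
          try abel
    | hA b β' =>
      induction t using TensorProduct.induction_on with
      | zero => simp
      | add x y hx hy =>
        simp only [SMF_add_left, BRF_add_right, ANF_add_right, hx, hy]
        abel
      | tmul c c' =>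
        simp only [SMF, ANF, BRF, SM1_tmul, SM2_tmul, AN1_tmul, AN2_tmul,
          BR11_tmul, BR12a_tmul, BR12b_tmul, BR22_tmul,
          map_zero, LinearMap.zero_apply, map_add, LinearMap.add_apply,
          map_neg, LinearMap.neg_apply, map_sub, LinearMap.sub_apply,
          Prod.fst_add, Prod.snd_add, add_zero, zero_add, sub_zero, zero_sub,
          neg_zero, tmul_zero, zero_tmul, neg_neg, Prod.mk_add_mk, Prod.mk.injEq]
        simp only [c15 h, c15 h', c15l h, c15l h', c13 h, c13 h', c12 h,
          c12 h', c14 h, c14 h']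
        refine ⟨?_, ?_⟩ <;>
        · simp only [← c3 h, ← c3 h', add_tmul, tmul_add, sub_tmul, tmul_sub,
            neg_tmul, tmul_neg, neg_neg, smul_neg, Prod.mk_add_mk, Prod.mk.injEq,
            mul_comm, mul_left_comm, mul_assoc]
          try abel
  | hA a α' =>
    induction q using P_ind with
    | h0 => simp
    | hadd q1 q2 hq1 hq2 =>
      simp only [SMF_add_right, BRF_add_right, hq1, hq2]
      abel
    | hL β b' =>
      induction t using TensorProduct.induction_on with
      | zero => simp
      | add x y hx hy =>
        simp only [SMF_add_left, BRF_add_right, ANF_add_right, hx, hy]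
        abel
      | tmul c c' =>
        simp only [SMF, ANF, BRF, SM1_tmul, SM2_tmul, AN1_tmul, AN2_tmul,
          BR11_tmul, BR12a_tmul, BR12b_tmul, BR22_tmul,
          map_zero, LinearMap.zero_apply, map_add, LinearMap.add_apply,
          map_neg, LinearMap.neg_apply, map_sub, LinearMap.sub_apply,
          Prod.fst_add, Prod.snd_add, add_zero, zero_add, sub_zero, zero_sub,
          neg_zero, tmul_zero, zero_tmul, neg_neg, Prod.mk_add_mk, Prod.mk.injEq]
        simp only [c15 h, c15 h', c15l h, c15l h', c13 h, c13 h', c12 h,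
          c12 h', c14 h, c14 h']
        refine ⟨?_, ?_⟩ <;>
        · simp only [← c3 h, ← c3 h', add_tmul, tmul_add, sub_tmul, tmul_sub,
            neg_tmul, tmul_neg, neg_neg, smul_neg, Prod.mk_add_mk, Prod.mk.injEq,
            mul_comm, mul_left_comm, mul_assoc]
          try abel
    | hA b β' =>
      induction t using TensorProduct.induction_on with
      | zero => simp
      | add x y hx hy =>
        simp only [SMF_add_left, BRF_add_right, ANF_add_right, hx, hy]
        abel
      | tmul c c' =>
        simp only [SMF, ANF, BRF, SM1_tmul, SM2_tmul, AN1_tmul, AN2_tmul,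
          BR11_tmul, BR12a_tmul, BR12b_tmul, BR22_tmul,
          map_zero, LinearMap.zero_apply, map_add, LinearMap.add_apply,
          map_neg, LinearMap.neg_apply, map_sub, LinearMap.sub_apply,
          Prod.fst_add, Prod.snd_add, add_zero, zero_add, sub_zero, zero_sub,
          neg_zero, tmul_zero, zero_tmul, neg_neg, Prod.mk_add_mk, Prod.mk.injEq]
        simp only [c15 h, c15 h', c15l h, c15l h', c13 h, c13 h', c12 h,
          c12 h', c14 h, c14 h']
        refine ⟨?_, ?_⟩ <;>
        · simp only [← c3 h, ← c3 h', add_tmul, tmul_add, sub_tmul, tmul_sub,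
            neg_tmul, tmul_neg, neg_neg, smul_neg, Prod.mk_add_mk, Prod.mk.injEq,
            mul_comm, mul_left_comm, mul_assoc]
          try abel

end LR11

end Aux11d

section Aux11e

namespace LR11

variable {R : Type u} [CommRing R] {A : Type v} [CommRing A] [Algebra R A]
  {A' : Type v} [CommRing A'] [Algebra R A']
  {L : Type v} [AddCommGroup L] [Module R L]
  {L' : Type v} [AddCommGroup L'] [Module R L']
  {sm : A → L → L} {br : L → L → L} {an : L → A → A}
  {sm' : A' → L' → L'} {br' : L' → L' → L'} {an' : L' → A' → A'}
  (h : IsLR R A L sm br an) (h' : IsLR R A' L' sm' br' an')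

theorem JAC (x y z : (L ⊗[R] A') × (A ⊗[R] L')) :
    BRF h h' x (BRF h h' y z) =
      BRF h h' (BRF h h' x y) z + BRF h h' y (BRF h h' x z) := by
  induction x using P_ind with
  | h0 => simp
  | hadd x1 x2 hx1 hx2 =>
    simp only [BRF_add_left, BRF_add_right, hx1, hx2]
    abel
  | hL α a' =>
    induction y using P_ind with
    | h0 => simp
    | hadd y1 y2 hy1 hy2 =>
      simp only [BRF_add_left, BRF_add_right, hy1, hy2]
      abel
    | hL β b' =>
      induction z using P_ind with
      | h0 => simp
      | hadd z1 z2 hz1 hz2 =>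
        simp only [BRF_add_left, BRF_add_right, hz1, hz2]
        abel
      | hL γ c' =>
        simp only [SMF, ANF, BRF, SM1_tmul, SM2_tmul, AN1_tmul, AN2_tmul,
          BR11_tmul, BR12a_tmul, BR12b_tmul, BR22_tmul,
          map_zero, LinearMap.zero_apply, map_add, LinearMap.add_apply,
          map_neg, LinearMap.neg_apply, map_sub, LinearMap.sub_apply,
          Prod.fst_add, Prod.snd_add, add_zero, zero_add, sub_zero, zero_sub,
          neg_zero, tmul_zero, zero_tmul, neg_neg, Prod.mk_add_mk, Prod.mk.injEq]
        rw [c9 h]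
        refine ⟨?_, ?_⟩ <;>
        · simp only [← c3 h, ← c3 h', add_tmul, tmul_add, sub_tmul, tmul_sub,
            neg_tmul, tmul_neg, neg_neg, smul_neg, Prod.mk_add_mk, Prod.mk.injEq,
            mul_comm, mul_left_comm, mul_assoc]
          try abel
      | hA c γ' =>
        simp only [SMF, ANF, BRF, SM1_tmul, SM2_tmul, AN1_tmul, AN2_tmul,
          BR11_tmul, BR12a_tmul, BR12b_tmul, BR22_tmul,
          map_zero, LinearMap.zero_apply, map_add, LinearMap.add_apply,
          map_neg, LinearMap.neg_apply, map_sub, LinearMap.sub_apply,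
          Prod.fst_add, Prod.snd_add, add_zero, zero_add, sub_zero, zero_sub,
          neg_zero, tmul_zero, zero_tmul, neg_neg, Prod.mk_add_mk, Prod.mk.injEq]
        simp only [c15 h, c15 h', c15l h, c15l h', c13 h, c13 h', c12 h,
          c12 h', c14 h, c14 h', br_anti h β α]
        refine ⟨?_, ?_⟩ <;>
        · simp only [(c1 h c).map_neg, ← c3 h, ← c3 h', add_tmul, tmul_add, sub_tmul, tmul_sub,
            neg_tmul, tmul_neg, neg_neg, smul_neg, Prod.mk_add_mk, Prod.mk.injEq,
            mul_comm, mul_left_comm, mul_assoc]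
          try abel
    | hA b β' =>
      induction z using P_ind with
      | h0 => simp
      | hadd z1 z2 hz1 hz2 =>
        simp only [BRF_add_left, BRF_add_right, hz1, hz2]
        abel
      | hL γ c' =>
        simp only [SMF, ANF, BRF, SM1_tmul, SM2_tmul, AN1_tmul, AN2_tmul,
          BR11_tmul, BR12a_tmul, BR12b_tmul, BR22_tmul,
          map_zero, LinearMap.zero_apply, map_add, LinearMap.add_apply,
          map_neg, LinearMap.neg_apply, map_sub, LinearMap.sub_apply,
          Prod.fst_add, Prod.snd_add, add_zero, zero_add, sub_zero, zero_sub,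
          neg_zero, tmul_zero, zero_tmul, neg_neg, Prod.mk_add_mk, Prod.mk.injEq]
        simp only [c15 h, c15 h', c15l h, c15l h', c13 h, c13 h', c12 h,
          c12 h', c14 h, c14 h']
        refine ⟨?_, ?_⟩ <;>
        · simp only [← c3 h, ← c3 h', add_tmul, tmul_add, sub_tmul, tmul_sub,
            neg_tmul, tmul_neg, neg_neg, smul_neg, Prod.mk_add_mk, Prod.mk.injEq,
            mul_comm, mul_left_comm, mul_assoc]
          try abel
      | hA c γ' =>
        simp only [SMF, ANF, BRF, SM1_tmul, SM2_tmul, AN1_tmul, AN2_tmul,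
          BR11_tmul, BR12a_tmul, BR12b_tmul, BR22_tmul,
          map_zero, LinearMap.zero_apply, map_add, LinearMap.add_apply,
          map_neg, LinearMap.neg_apply, map_sub, LinearMap.sub_apply,
          Prod.fst_add, Prod.snd_add, add_zero, zero_add, sub_zero, zero_sub,
          neg_zero, tmul_zero, zero_tmul, neg_neg, Prod.mk_add_mk, Prod.mk.injEq]
        simp only [c15 h, c15 h', c15l h, c15l h', c13 h, c13 h', c12 h,
          c12 h', c14 h, c14 h']
        refine ⟨?_, ?_⟩ <;>
        · simp only [← c3 h, ← c3 h', add_tmul, tmul_add, sub_tmul, tmul_sub,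
            neg_tmul, tmul_neg, neg_neg, smul_neg, Prod.mk_add_mk, Prod.mk.injEq,
            mul_comm, mul_left_comm, mul_assoc]
          try abel
  | hA a α' =>
    induction y using P_ind with
    | h0 => simp
    | hadd y1 y2 hy1 hy2 =>
      simp only [BRF_add_left, BRF_add_right, hy1, hy2]
      abel
    | hL β b' =>
      induction z using P_ind with
      | h0 => simp
      | hadd z1 z2 hz1 hz2 =>
        simp only [BRF_add_left, BRF_add_right, hz1, hz2]
        abel
      | hL γ c' =>
        simp only [SMF, ANF, BRF, SM1_tmul, SM2_tmul, AN1_tmul, AN2_tmul,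
          BR11_tmul, BR12a_tmul, BR12b_tmul, BR22_tmul,
          map_zero, LinearMap.zero_apply, map_add, LinearMap.add_apply,
          map_neg, LinearMap.neg_apply, map_sub, LinearMap.sub_apply,
          Prod.fst_add, Prod.snd_add, add_zero, zero_add, sub_zero, zero_sub,
          neg_zero, tmul_zero, zero_tmul, neg_neg, Prod.mk_add_mk, Prod.mk.injEq]
        simp only [c15 h, c15 h', c15l h, c15l h', c13 h, c13 h', c12 h,
          c12 h', c14 h, c14 h']
        refine ⟨?_, ?_⟩ <;>
        · simp only [← c3 h, ← c3 h', add_tmul, tmul_add, sub_tmul, tmul_sub,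
            neg_tmul, tmul_neg, neg_neg, smul_neg, Prod.mk_add_mk, Prod.mk.injEq,
            mul_comm, mul_left_comm, mul_assoc]
          try abel
      | hA c γ' =>
        simp only [SMF, ANF, BRF, SM1_tmul, SM2_tmul, AN1_tmul, AN2_tmul,
          BR11_tmul, BR12a_tmul, BR12b_tmul, BR22_tmul,
          map_zero, LinearMap.zero_apply, map_add, LinearMap.add_apply,
          map_neg, LinearMap.neg_apply, map_sub, LinearMap.sub_apply,
          Prod.fst_add, Prod.snd_add, add_zero, zero_add, sub_zero, zero_sub,
          neg_zero, tmul_zero, zero_tmul, neg_neg, Prod.mk_add_mk, Prod.mk.injEq]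
        simp only [c15 h, c15 h', c15l h, c15l h', c13 h, c13 h', c12 h,
          c12 h', c14 h, c14 h']
        refine ⟨?_, ?_⟩ <;>
        · simp only [← c3 h, ← c3 h', add_tmul, tmul_add, sub_tmul, tmul_sub,
            neg_tmul, tmul_neg, neg_neg, smul_neg, Prod.mk_add_mk, Prod.mk.injEq,
            mul_comm, mul_left_comm, mul_assoc]
          try abel
    | hA b β' =>
      induction z using P_ind with
      | h0 => simp
      | hadd z1 z2 hz1 hz2 =>
        simp only [BRF_add_left, BRF_add_right, hz1, hz2]
        abel
      | hL γ c' =>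
        simp only [SMF, ANF, BRF, SM1_tmul, SM2_tmul, AN1_tmul, AN2_tmul,
          BR11_tmul, BR12a_tmul, BR12b_tmul, BR22_tmul,
          map_zero, LinearMap.zero_apply, map_add, LinearMap.add_apply,
          map_neg, LinearMap.neg_apply, map_sub, LinearMap.sub_apply,
          Prod.fst_add, Prod.snd_add, add_zero, zero_add, sub_zero, zero_sub,
          neg_zero, tmul_zero, zero_tmul, neg_neg, Prod.mk_add_mk, Prod.mk.injEq]
        simp only [c15 h, c15 h', c15l h, c15l h', c13 h, c13 h', c12 h,
          c12 h', c14 h, c14 h', br_anti h' β' α']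
        refine ⟨?_, ?_⟩ <;>
        · simp only [(c1 h' c').map_neg, ← c3 h, ← c3 h', add_tmul, tmul_add, sub_tmul, tmul_sub,
            neg_tmul, tmul_neg, neg_neg, smul_neg, Prod.mk_add_mk, Prod.mk.injEq,
            mul_comm, mul_left_comm, mul_assoc]
          try abel
      | hA c γ' =>
        simp only [SMF, ANF, BRF, SM1_tmul, SM2_tmul, AN1_tmul, AN2_tmul,
          BR11_tmul, BR12a_tmul, BR12b_tmul, BR22_tmul,
          map_zero, LinearMap.zero_apply, map_add, LinearMap.add_apply,
          map_neg, LinearMap.neg_apply, map_sub, LinearMap.sub_apply,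
          Prod.fst_add, Prod.snd_add, add_zero, zero_add, sub_zero, zero_sub,
          neg_zero, tmul_zero, zero_tmul, neg_neg, Prod.mk_add_mk, Prod.mk.injEq]
        rw [c9 h']
        refine ⟨?_, ?_⟩ <;>
        · simp only [← c3 h, ← c3 h', add_tmul, tmul_add, sub_tmul, tmul_sub,
            neg_tmul, tmul_neg, neg_neg, smul_neg, Prod.mk_add_mk, Prod.mk.injEq,
            mul_comm, mul_left_comm, mul_assoc]
          try abel

end LR11

end Aux11e

open LR11 in
/-- for Lie-Rinehart algebras `(A,L)` and `(A',L')`, the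
`R`-module `L ⊗ A' ⊕ A ⊗ L'` carries a natural `(R, A ⊗ A')`-Lie algebra
structure, with componentwise module structure, bracket determined by the
brackets and anchors of `L` and `L'`, and anchor given on `A ⊗ A'` by
`(α⊗a')(b⊗b') = α(b) ⊗ a'b'` and `(a⊗α')(b⊗b') = ab ⊗ α'(b')`. -/
theorem stmt11 (R : Type u) [CommRing R] (A : Type v) [CommRing A] [Algebra R A]
    (A' : Type v) [CommRing A'] [Algebra R A']
    (L : Type v) [AddCommGroup L] [Module R L]
    (L' : Type v) [AddCommGroup L'] [Module R L']
    (sm : A → L → L) (br : L → L → L) (an : L → A → A)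
    (sm' : A' → L' → L') (br' : L' → L' → L') (an' : L' → A' → A')
    (h : IsLR R A L sm br an) (h' : IsLR R A' L' sm' br' an') :
    ∃ (SM : A ⊗[R] A' → (L ⊗[R] A') × (A ⊗[R] L') → (L ⊗[R] A') × (A ⊗[R] L'))
      (BR : (L ⊗[R] A') × (A ⊗[R] L') → (L ⊗[R] A') × (A ⊗[R] L') →
        (L ⊗[R] A') × (A ⊗[R] L'))
      (AN : (L ⊗[R] A') × (A ⊗[R] L') → A ⊗[R] A' → A ⊗[R] A'),
      IsLR R (A ⊗[R] A') ((L ⊗[R] A') × (A ⊗[R] L')) SM BR AN ∧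
      -- componentwise module structure
      (∀ (a c : A) (a' c' : A') (α : L) (α' : L'),
        SM (a ⊗ₜ[R] a') (α ⊗ₜ[R] c', c ⊗ₜ[R] α') =
          ((sm a α) ⊗ₜ[R] (a' * c'), (a * c) ⊗ₜ[R] (sm' a' α'))) ∧
      -- anchor
      (∀ (α : L) (a' : A') (b : A) (b' : A'),
        AN (α ⊗ₜ[R] a', 0) (b ⊗ₜ[R] b') = (an α b) ⊗ₜ[R] (a' * b')) ∧
      (∀ (a : A) (α' : L') (b : A) (b' : A'),
        AN (0, a ⊗ₜ[R] α') (b ⊗ₜ[R] b') = (a * b) ⊗ₜ[R] (an' α' b')) ∧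
      -- bracket determined by the brackets of L and L'
      (∀ (α β : L), BR (α ⊗ₜ[R] 1, 0) (β ⊗ₜ[R] 1, 0) = ((br α β) ⊗ₜ[R] 1, 0)) ∧
      (∀ (α' β' : L'),
        BR (0, 1 ⊗ₜ[R] α') (0, 1 ⊗ₜ[R] β') = (0, 1 ⊗ₜ[R] (br' α' β'))) ∧
      (∀ (α : L) (α' : L'), BR (α ⊗ₜ[R] 1, 0) (0, 1 ⊗ₜ[R] α') = 0) := by
  refine ⟨SMF h h', BRF h h', ANF h h',
    ⟨?_, ?_, ?_, ?_, ?_, ?_, ?_, ?_, ?_, ?_, ?_, ?_, ?_, ?_, ?_⟩,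
    ?_, ?_, ?_, ?_, ?_, ?_⟩
  · -- SM t is R-linear
    intro t
    exact ⟨fun p q => SMF_add_right h h' t p q,
      fun c p => by simp [SMF, Prod.smul_fst, Prod.smul_snd, map_smul, Prod.smul_mk]⟩
  · -- SM 1 = id
    intro p
    simp [SMF, SM1_one h h', SM2_one h h']
  · -- SM multiplicative
    intro a b p
    simp [SMF, SM1_mul h h', SM2_mul h h']
  · -- SM additive in scalar
    exact fun a b p => SMF_add_left h h' a b p
  · -- SM R-homogeneous in scalar
    intro r a p
    simp [SMF, map_smul, LinearMap.smul_apply, Prod.smul_mk]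
  · -- BR x linear
    intro p
    refine ⟨fun q r => BRF_add_right h h' p q r, fun c q => ?_⟩
    simp only [BRF, Prod.smul_fst, Prod.smul_snd, map_smul, LinearMap.smul_apply,
      Prod.smul_mk, smul_add, smul_sub]
  · -- BR _ y linear
    intro q
    refine ⟨fun p r => BRF_add_left h h' p r q, fun c p => ?_⟩
    simp only [BRF, Prod.smul_fst, Prod.smul_snd, map_smul, LinearMap.smul_apply,
      Prod.smul_mk, smul_add, smul_sub]
  · -- alternating
    exact fun p => BRF_self h h' p
  · -- Leibniz/Jacobi identity
    exact fun x y z => JAC h h' x y z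
  · -- AN x linear
    intro p
    exact ⟨fun s t => ANF_add_right h h' p s t,
      fun c t => by simp [ANF, map_smul, smul_add]⟩
  · -- AN _ a linear
    intro t
    refine ⟨fun p q => ANF_add_left h h' p q t, fun c p => ?_⟩
    simp [ANF, Prod.smul_fst, Prod.smul_snd, map_smul, LinearMap.smul_apply, smul_add]
  · -- anchor is a derivation
    exact fun p s t => AN_der h h' p s t
  · -- anchor is a Lie homomorphism
    exact fun p q t => AN_BR h h' p q t
  · -- anchor is A-linear
    exact fun t p s => AN_SM h h' t p s
  · -- Leibniz rule for the bracket
    exact fun p t q => BR_SM h h' p t q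
  · -- module structure formula
    intro a c a' c' α α'
    simp [SMF]
  · -- anchor formula 1
    intro α a' b b'
    simp [ANF]
  · -- anchor formula 2
    intro a α' b b'
    simp [ANF]
  · -- bracket formula 1
    intro α β
    simp [BRF]
  · -- bracket formula 2
    intro α' β'
    simp [BRF]
  · -- bracket formula 3
    intro α α'
    simp [BRF, an_one h, an_one h', Prod.ext_iff]
end

section
/- Let $(A,L)$ be a Lie-Rinehart algebra. The $R$-algebra $\mathrm U(A,L)\otimes\mathrm U(A,L)$, together with $\iota_A\otimes\iota_A\colon A\otimes A\to\mathrm U(A,L)\otimes\mathrm U(A,L)$ and $\iota_L\otimes\iota_A\oplus\iota_A\otimes\iota_L\colon L\otimes A\oplus A\otimes L\to\mathrm U(A,L)\otimes\mathrm U(A,L)$, satisfies the universal property of the universal algebra $\mathrm U(A\otimes A, L\otimes A\oplus A\otimes L)$; hence these algebras are canonically isomorphic. -/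
open TensorProduct

universe u v w x y

set_option maxHeartbeats 4000000 in
/-- the algebra `U(A,L) ⊗ U(A,L)`, with `ιA ⊗ ιA` and
`ιL ⊗ ιA ⊕ ιA ⊗ ιL`, satisfies the universal property of the universal algebra
`U(A ⊗ A, L ⊗ A ⊕ A ⊗ L)` of the natural `(R, A ⊗ A)`-Lie algebra structure
on `L ⊗ A ⊕ A ⊗ L`; hence the two algebras are canonically isomorphic. -/
theorem stmt12 (R : Type u) [CommRing R] (A : Type v) [CommRing A] [Algebra R A]
    (L : Type v) [AddCommGroup L] [Module R L]
    (sm : A → L → L) (br : L → L → L) (an : L → A → A)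
    (h : IsLR R A L sm br an)
    -- the natural `(R, A ⊗ A)`-Lie algebra structure on `L ⊗ A ⊕ A ⊗ L`
    (SM : A ⊗[R] A → (L ⊗[R] A) × (A ⊗[R] L) → (L ⊗[R] A) × (A ⊗[R] L))
    (BR : (L ⊗[R] A) × (A ⊗[R] L) → (L ⊗[R] A) × (A ⊗[R] L) →
      (L ⊗[R] A) × (A ⊗[R] L))
    (AN : (L ⊗[R] A) × (A ⊗[R] L) → A ⊗[R] A → A ⊗[R] A)
    (hLR : IsLR R (A ⊗[R] A) ((L ⊗[R] A) × (A ⊗[R] L)) SM BR AN)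
    (hSM : ∀ (a c b : A) (α β : L),
      SM (a ⊗ₜ[R] b) (α ⊗ₜ[R] c, c ⊗ₜ[R] β) =
        ((sm a α) ⊗ₜ[R] (b * c), (a * c) ⊗ₜ[R] (sm b β)))
    (hAN₁ : ∀ (α : L) (a b b' : A),
      AN (α ⊗ₜ[R] a, 0) (b ⊗ₜ[R] b') = (an α b) ⊗ₜ[R] (a * b'))
    (hAN₂ : ∀ (a b b' : A) (α : L),
      AN (0, a ⊗ₜ[R] α) (b ⊗ₜ[R] b') = (a * b) ⊗ₜ[R] (an α b'))
    (hBR₁ : ∀ α β : L, BR (α ⊗ₜ[R] 1, 0) (β ⊗ₜ[R] 1, 0) = ((br α β) ⊗ₜ[R] 1, 0))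
    (hBR₂ : ∀ α β : L, BR (0, 1 ⊗ₜ[R] α) (0, 1 ⊗ₜ[R] β) = (0, 1 ⊗ₜ[R] (br α β)))
    (hBR₃ : ∀ α β : L, BR (α ⊗ₜ[R] 1, 0) (0, 1 ⊗ₜ[R] β) = 0)
    -- the universal algebra of `(A, L)`
    (U : Type v) [Ring U] [Algebra R U] (ιA : A → U) (ιL : L → U)
    (hu : IsUniversalLR R A L sm br an U ιA ιL) :
    ∃ (jA : A ⊗[R] A → U ⊗[R] U)
      (jL : (L ⊗[R] A) × (A ⊗[R] L) → U ⊗[R] U),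
      (∀ a b : A, jA (a ⊗ₜ[R] b) = ιA a ⊗ₜ[R] ιA b) ∧
      (∀ (α : L) (a : A), jL (α ⊗ₜ[R] a, 0) = ιL α ⊗ₜ[R] ιA a) ∧
      (∀ (a : A) (α : L), jL (0, a ⊗ₜ[R] α) = ιA a ⊗ₜ[R] ιL α) ∧
      IsUniversalLR R (A ⊗[R] A) ((L ⊗[R] A) × (A ⊗[R] L)) SM BR AN
        (U ⊗[R] U) jA jL := by

  classical
  obtain ⟨hiA, hiL, hAL, hLL, hLA, huniv⟩ := hu
  obtain ⟨Hsml, Hsm1, Hsmm, Hsma, Hsms, Hbrl, Hbrl', Hbr0, Hjac, Hanl, Hanl',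
    Hlei, Hanbr, Hansm, Hbrsm⟩ := hLR
  have sm1 : ∀ x : L, sm 1 x = x := h.2.1
  have smz : ∀ a : A, sm a 0 = 0 := fun a => (h.1 a).map_zero
  have an1 : ∀ x : L, an x 1 = 0 := by
    intro x
    have e := h.2.2.2.2.2.2.2.2.2.2.2.1 x 1 1
    rw [mul_one, mul_one, one_mul] at e
    exact right_eq_add.mp e
  -- typed linearity facts for SM, BR, AN
  have SMa : ∀ c x y, SM c (x + y) = SM c x + SM c y := fun c x y => (Hsml c).1 x y
  have SMz : ∀ c, SM c 0 = 0 := fun c => (Hsml c).map_zero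
  have SMn : ∀ c x, SM c (-x) = - SM c x := fun c x => (Hsml c).map_neg x
  have SM0 : ∀ x, SM 0 x = 0 := by
    intro x
    have e := Hsma 0 0 x
    rw [add_zero] at e
    exact right_eq_add.mp e
  have BRar : ∀ x y z, BR x (y + z) = BR x y + BR x z := fun x y z => (Hbrl x).1 y z
  have BRal : ∀ x y z, BR (x + y) z = BR x z + BR y z := fun x y z => (Hbrl' z).1 x y
  have BRzr : ∀ x, BR x 0 = 0 := fun x => (Hbrl x).map_zero
  have BRzl : ∀ y, BR 0 y = 0 := fun y => (Hbrl' y).map_zero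
  have BRanti : ∀ x y, BR x y = - BR y x := by
    intro x y
    have e := Hbr0 (x + y)
    rw [BRal, BRar, BRar, Hbr0 x, Hbr0 y, zero_add, add_zero] at e
    exact eq_neg_of_add_eq_zero_left e
  have ANar : ∀ x c d, AN x (c + d) = AN x c + AN x d := fun x c d => (Hanl x).1 c d
  have ANzl : ∀ c, AN 0 c = 0 := fun c => (Hanl' c).map_zero
  have ANzr : ∀ x, AN x 0 = 0 := fun x => (Hanl x).map_zero
  have ANal : ∀ x y c, AN (x + y) c = AN x c + AN y c := fun x y c => (Hanl' c).1 x y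
  have BRsmL : ∀ c x y, BR (SM c x) y = SM c (BR x y) - SM (AN y c) x := by
    intro c x y
    rw [BRanti, Hbrsm y c x, BRanti y x, SMn]
    abel
  -- pure-tensor formulas for SM
  have hSM10 : ∀ (a b : A) (α : L) (c : A),
      SM (a ⊗ₜ[R] b) ((α ⊗ₜ[R] c : L ⊗[R] A), (0 : A ⊗[R] L)) =
        ((sm a α) ⊗ₜ[R] (b * c), 0) := by
    intro a b α c
    have e := hSM a c b α 0
    simp only [tmul_zero, smz] at e
    exact e
  have hSM01 : ∀ (a b c : A) (β : L),
      SM (a ⊗ₜ[R] b) ((0 : L ⊗[R] A), c ⊗ₜ[R] β) = (0, (a * c) ⊗ₜ[R] (sm b β)) := by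
    intro a b c β
    have e := hSM a c b 0 β
    simp only [zero_tmul, smz] at e
    exact e
  -- pure-tensor formulas for BR
  have F1 : ∀ (α β : L) (a b : A),
      BR (α ⊗ₜ[R] a, 0) (β ⊗ₜ[R] b, 0) = ((br α β) ⊗ₜ[R] (a * b), 0) := by
    intro α β a b
    have e2 : ((β ⊗ₜ[R] b : L ⊗[R] A), (0 : A ⊗[R] L)) =
        SM (1 ⊗ₜ[R] b) (β ⊗ₜ[R] 1, 0) := by rw [hSM10, sm1, mul_one]
    have step1 : BR (α ⊗ₜ[R] 1, 0) (β ⊗ₜ[R] b, 0) = ((br α β) ⊗ₜ[R] b, 0) := by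
      rw [e2, Hbrsm, hBR₁, hAN₁, an1, zero_tmul, SM0, add_zero, hSM10, sm1, mul_one]
    have e1 : ((α ⊗ₜ[R] a : L ⊗[R] A), (0 : A ⊗[R] L)) =
        SM (1 ⊗ₜ[R] a) (α ⊗ₜ[R] 1, 0) := by rw [hSM10, sm1, mul_one]
    rw [e1, BRsmL, step1, hAN₁, an1, zero_tmul, SM0, sub_zero, hSM10, sm1]
  have F2 : ∀ (α β : L) (a b : A),
      BR (0, a ⊗ₜ[R] α) (0, b ⊗ₜ[R] β) = (0, (a * b) ⊗ₜ[R] (br α β)) := by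
    intro α β a b
    have e2 : ((0 : L ⊗[R] A), (b ⊗ₜ[R] β : A ⊗[R] L)) =
        SM (b ⊗ₜ[R] 1) (0, 1 ⊗ₜ[R] β) := by rw [hSM01, sm1, mul_one]
    have step1 : BR (0, 1 ⊗ₜ[R] α) (0, b ⊗ₜ[R] β) = (0, b ⊗ₜ[R] (br α β)) := by
      rw [e2, Hbrsm, hBR₂, hAN₂, an1, tmul_zero, SM0, add_zero, hSM01, sm1, mul_one]
    have e1 : ((0 : L ⊗[R] A), (a ⊗ₜ[R] α : A ⊗[R] L)) =
        SM (a ⊗ₜ[R] 1) (0, 1 ⊗ₜ[R] α) := by rw [hSM01, sm1, mul_one]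
    rw [e1, BRsmL, step1, hAN₂, an1, tmul_zero, SM0, sub_zero, hSM01, sm1]
  have F3 : ∀ (α β : L) (a b : A),
      BR (α ⊗ₜ[R] a, 0) (0, b ⊗ₜ[R] β) =
        ((0 : L ⊗[R] A), (an α b) ⊗ₜ[R] (sm a β)) -
          ((sm b α) ⊗ₜ[R] (an β a), (0 : A ⊗[R] L)) := by
    intro α β a b
    have e1 : ((α ⊗ₜ[R] a : L ⊗[R] A), (0 : A ⊗[R] L)) =
        SM (1 ⊗ₜ[R] a) (α ⊗ₜ[R] 1, 0) := by rw [hSM10, sm1, mul_one]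
    have step1 : BR (α ⊗ₜ[R] a, 0) ((0 : L ⊗[R] A), 1 ⊗ₜ[R] β) =
        -((α ⊗ₜ[R] (an β a) : L ⊗[R] A), (0 : A ⊗[R] L)) := by
      rw [e1, BRsmL, hBR₃, SMz, hAN₂, one_mul, zero_sub, hSM10, sm1, mul_one]
    have e2 : ((0 : L ⊗[R] A), (b ⊗ₜ[R] β : A ⊗[R] L)) =
        SM (b ⊗ₜ[R] 1) (0, 1 ⊗ₜ[R] β) := by rw [hSM01, sm1, mul_one]
    rw [e2, Hbrsm, step1, SMn, hAN₁, mul_one, hSM10, hSM01]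
    simp only [sm1, mul_one, one_mul]
    abel
  -- product/tensor induction principle
  have prodInd : ∀ Q : (L ⊗[R] A) × (A ⊗[R] L) → Prop,
      Q 0 → (∀ u v, Q u → Q v → Q (u + v)) →
      (∀ (α : L) (a : A), Q (α ⊗ₜ[R] a, 0)) →
      (∀ (a : A) (α : L), Q (0, a ⊗ₜ[R] α)) → ∀ x, Q x := by
    intro Q h0 hadd h1 h2
    have k1 : ∀ x1 : L ⊗[R] A, Q (x1, 0) := by
      intro x1
      induction x1 using TensorProduct.induction_on with
      | zero => exact h0
      | tmul α a => exact h1 α a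
      | add u v hu hv =>
        have e2 : ((u + v : L ⊗[R] A), (0 : A ⊗[R] L)) = (u, 0) + (v, 0) := by
          rw [Prod.mk_add_mk, add_zero]
        rw [e2]; exact hadd _ _ hu hv
    have k2 : ∀ x2 : A ⊗[R] L, Q (0, x2) := by
      intro x2
      induction x2 using TensorProduct.induction_on with
      | zero => exact h0
      | tmul a α => exact h2 a α
      | add u v hu hv =>
        have e2 : ((0 : L ⊗[R] A), u + v) = (0, u) + (0, v) := by
          rw [Prod.mk_add_mk, zero_add]
        rw [e2]; exact hadd _ _ hu hv
    intro x
    obtain ⟨x1, x2⟩ := x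
    have e : (x1, x2) = (x1, (0 : A ⊗[R] L)) + ((0 : L ⊗[R] A), x2) := by
      rw [Prod.mk_add_mk, add_zero, zero_add]
    rw [e]
    exact hadd _ _ (k1 x1) (k2 x2)
  -- the maps jA, jL
  obtain ⟨jAh, jLl, hjA, hjL1, hjL2⟩ :
      ∃ (jAh : A ⊗[R] A →ₐ[R] U ⊗[R] U)
        (jLl : (L ⊗[R] A) × (A ⊗[R] L) →ₗ[R] U ⊗[R] U),
        (∀ a b : A, jAh (a ⊗ₜ[R] b) = ιA a ⊗ₜ[R] ιA b) ∧
        (∀ (α : L) (a : A), jLl (α ⊗ₜ[R] a, 0) = ιL α ⊗ₜ[R] ιA a) ∧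
        (∀ (a : A) (α : L), jLl (0, a ⊗ₜ[R] α) = ιA a ⊗ₜ[R] ιL α) := by
    refine ⟨Algebra.TensorProduct.map
        (AlgHom.ofLinearMap (IsLinearMap.mk' ιA hiA.1) hiA.2.1 hiA.2.2)
        (AlgHom.ofLinearMap (IsLinearMap.mk' ιA hiA.1) hiA.2.1 hiA.2.2),
      LinearMap.coprod
        (TensorProduct.map (IsLinearMap.mk' ιL hiL) (IsLinearMap.mk' ιA hiA.1))
        (TensorProduct.map (IsLinearMap.mk' ιA hiA.1) (IsLinearMap.mk' ιL hiL)),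
      ?_, ?_, ?_⟩ <;> intros <;> simp <;> rfl
  have hLA' : ∀ (x : L) (a : A), ιL x * ιA a = ιA a * ιL x + ιA (an x a) := by
    intro x a
    rw [← hLA x a]
    abel
  -- relation: SM compatibility
  have rel3 : ∀ (c : A ⊗[R] A) (x : (L ⊗[R] A) × (A ⊗[R] L)),
      jAh c * jLl x = jLl (SM c x) := by
    intro c x
    induction c using TensorProduct.induction_on with
    | zero => rw [map_zero, zero_mul, SM0, map_zero]
    | tmul a b =>
      refine prodInd (fun x => jAh (a ⊗ₜ[R] b) * jLl x = jLl (SM (a ⊗ₜ[R] b) x))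
        ?_ ?_ ?_ ?_ x
      · try dsimp only
        rw [map_zero, mul_zero, SMz, map_zero]
      · intro u v hu hv
        try dsimp only at hu hv ⊢
        rw [map_add, mul_add, hu, hv, SMa, map_add]
      · intro α c'
        try dsimp only
        rw [hjA, hjL1, hSM10, hjL1, Algebra.TensorProduct.tmul_mul_tmul, hAL,
          hiA.2.2]
      · intro c' α
        try dsimp only
        rw [hjA, hjL2, hSM01, hjL2, Algebra.TensorProduct.tmul_mul_tmul, hAL,
          hiA.2.2]
    | add c c' hc hc' => rw [map_add, add_mul, hc, hc', Hsma, map_add]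
  -- relation: AN compatibility
  have rel5 : ∀ (x : (L ⊗[R] A) × (A ⊗[R] L)) (c : A ⊗[R] A),
      jLl x * jAh c - jAh c * jLl x = jAh (AN x c) := by
    refine prodInd (fun x => ∀ c, jLl x * jAh c - jAh c * jLl x = jAh (AN x c))
      ?_ ?_ ?_ ?_
    · intro c
      try dsimp only
      rw [map_zero, zero_mul, mul_zero, ANzl, map_zero, sub_zero]
    · intro u v hu hv c
      try dsimp only at hu hv ⊢
      rw [map_add, add_mul, mul_add, ANal, map_add, ← hu c, ← hv c]
      abel
    · intro α a c
      try dsimp only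
      induction c using TensorProduct.induction_on with
      | zero => rw [map_zero, mul_zero, zero_mul, ANzr, map_zero, sub_zero]
      | tmul b b' =>
        rw [hAN₁, hjA, hjA, hjL1, Algebra.TensorProduct.tmul_mul_tmul,
          Algebra.TensorProduct.tmul_mul_tmul, ← hiA.2.2 a b', ← hiA.2.2 b' a,
          mul_comm b' a, ← TensorProduct.sub_tmul, hLA]
      | add c c' h1 h2 =>
        rw [map_add, mul_add, add_mul, ANar, map_add, ← h1, ← h2]
        abel
    · intro a α c
      try dsimp only
      induction c using TensorProduct.induction_on with
      | zero => rw [map_zero, mul_zero, zero_mul, ANzr, map_zero, sub_zero]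
      | tmul b b' =>
        rw [hAN₂, hjA, hjA, hjL2, Algebra.TensorProduct.tmul_mul_tmul,
          Algebra.TensorProduct.tmul_mul_tmul, ← hiA.2.2 a b, ← hiA.2.2 b a,
          mul_comm b a, ← TensorProduct.tmul_sub, hLA]
      | add c c' h1 h2 =>
        rw [map_add, mul_add, add_mul, ANar, map_add, ← h1, ← h2]
        abel
  -- relation: BR compatibility
  have C11 : ∀ (α : L) (a : A) (β : L) (b : A),
      jLl (BR (α ⊗ₜ[R] a, 0) (β ⊗ₜ[R] b, 0)) =
        jLl (α ⊗ₜ[R] a, 0) * jLl (β ⊗ₜ[R] b, 0) -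
          jLl (β ⊗ₜ[R] b, 0) * jLl (α ⊗ₜ[R] a, 0) := by
    intro α a β b
    rw [F1, hjL1, hjL1, hjL1, Algebra.TensorProduct.tmul_mul_tmul,
      Algebra.TensorProduct.tmul_mul_tmul, hLL, ← hiA.2.2 a b, ← hiA.2.2 b a,
      mul_comm b a, TensorProduct.sub_tmul]
  have C22 : ∀ (a : A) (α : L) (b : A) (β : L),
      jLl (BR (0, a ⊗ₜ[R] α) (0, b ⊗ₜ[R] β)) =
        jLl (0, a ⊗ₜ[R] α) * jLl (0, b ⊗ₜ[R] β) -
          jLl (0, b ⊗ₜ[R] β) * jLl (0, a ⊗ₜ[R] α) := by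
    intro a α b β
    rw [F2, hjL2, hjL2, hjL2, Algebra.TensorProduct.tmul_mul_tmul,
      Algebra.TensorProduct.tmul_mul_tmul, hLL, ← hiA.2.2 a b, ← hiA.2.2 b a,
      mul_comm b a, TensorProduct.tmul_sub]
  have C12 : ∀ (α : L) (a b : A) (β : L),
      jLl (BR (α ⊗ₜ[R] a, 0) (0, b ⊗ₜ[R] β)) =
        jLl (α ⊗ₜ[R] a, 0) * jLl (0, b ⊗ₜ[R] β) -
          jLl (0, b ⊗ₜ[R] β) * jLl (α ⊗ₜ[R] a, 0) := by
    intro α a b β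
    rw [F3, map_sub, hjL2, hjL1, hjL1, hjL2, Algebra.TensorProduct.tmul_mul_tmul,
      Algebra.TensorProduct.tmul_mul_tmul, hLA' α b, hLA' β a, hAL a β, hAL b α,
      TensorProduct.add_tmul, TensorProduct.tmul_add]
    abel
  have C21 : ∀ (a : A) (α : L) (β : L) (b : A),
      jLl (BR (0, a ⊗ₜ[R] α) (β ⊗ₜ[R] b, 0)) =
        jLl (0, a ⊗ₜ[R] α) * jLl (β ⊗ₜ[R] b, 0) -
          jLl (β ⊗ₜ[R] b, 0) * jLl (0, a ⊗ₜ[R] α) := by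
    intro a α β b
    rw [BRanti, map_neg, C12, neg_sub]
  have rel4 : ∀ x y, jLl (BR x y) = jLl x * jLl y - jLl y * jLl x := by
    intro x y
    refine prodInd (fun x => ∀ y, jLl (BR x y) = jLl x * jLl y - jLl y * jLl x)
      ?_ ?_ ?_ ?_ x y
    · intro y
      try dsimp only
      rw [BRzl, map_zero, zero_mul, mul_zero, sub_zero]
    · intro u v hu hv y
      try dsimp only at hu hv ⊢
      rw [BRal, map_add, hu y, hv y, map_add, add_mul, mul_add]
      abel
    · intro α a
      refine prodInd (fun y => jLl (BR (α ⊗ₜ[R] a, 0) y) =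
        jLl (α ⊗ₜ[R] a, 0) * jLl y - jLl y * jLl (α ⊗ₜ[R] a, 0)) ?_ ?_ ?_ ?_
      · try dsimp only
        rw [BRzr, map_zero, mul_zero, zero_mul, sub_zero]
      · intro u v hu hv
        try dsimp only at hu hv ⊢
        rw [BRar, map_add, hu, hv, map_add, mul_add, add_mul]
        abel
      · intro β b; exact C11 α a β b
      · intro b β; exact C12 α a b β
    · intro a α
      refine prodInd (fun y => jLl (BR (0, a ⊗ₜ[R] α) y) =
        jLl (0, a ⊗ₜ[R] α) * jLl y - jLl y * jLl (0, a ⊗ₜ[R] α)) ?_ ?_ ?_ ?_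
      · try dsimp only
        rw [BRzr, map_zero, mul_zero, zero_mul, sub_zero]
      · intro u v hu hv
        try dsimp only at hu hv ⊢
        rw [BRar, map_add, hu, hv, map_add, mul_add, add_mul]
        abel
      · intro β b; exact C21 a α β b
      · intro b β; exact C22 a α b β
  refine ⟨⇑jAh, ⇑jLl, hjA, hjL1, hjL2,
    ⟨⟨fun u v => map_add jAh u v, fun r u => map_smul jAh r u⟩, map_one jAh,
      fun u v => map_mul jAh u v⟩,
    ⟨jLl.map_add, jLl.map_smul⟩, rel3, rel4, rel5, ?_⟩
  -- the universal property
  intro B iB aB φA φL hφA hφL relSM relBR relAN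
  -- restrictions to the two factors
  have c1A : IsAlgHomFun R (fun a : A => φA (a ⊗ₜ[R] (1 : A))) := by
    refine ⟨⟨fun a b => ?_, fun r a => ?_⟩, ?_, fun a b => ?_⟩ <;> try dsimp only
    · rw [TensorProduct.add_tmul]; exact hφA.1.1 _ _
    · rw [← TensorProduct.smul_tmul']; exact hφA.1.2 r _
    · rw [← Algebra.TensorProduct.one_def]; exact hφA.2.1
    · rw [show (a * b) ⊗ₜ[R] (1 : A) = (a ⊗ₜ[R] (1 : A)) * (b ⊗ₜ[R] (1 : A)) by
        rw [Algebra.TensorProduct.tmul_mul_tmul, one_mul]]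
      exact hφA.2.2 _ _
  have c2A : IsAlgHomFun R (fun a : A => φA ((1 : A) ⊗ₜ[R] a)) := by
    refine ⟨⟨fun a b => ?_, fun r a => ?_⟩, ?_, fun a b => ?_⟩ <;> try dsimp only
    · rw [TensorProduct.tmul_add]; exact hφA.1.1 _ _
    · rw [TensorProduct.tmul_smul]; exact hφA.1.2 r _
    · rw [← Algebra.TensorProduct.one_def]; exact hφA.2.1
    · rw [show (1 : A) ⊗ₜ[R] (a * b) = ((1 : A) ⊗ₜ[R] a) * ((1 : A) ⊗ₜ[R] b) by
        rw [Algebra.TensorProduct.tmul_mul_tmul, one_mul]]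
      exact hφA.2.2 _ _
  have c1L : IsLinearMap R
      (fun α : L => φL (α ⊗ₜ[R] (1 : A), (0 : A ⊗[R] L))) := by
    constructor
    · intro α β
      try dsimp only
      rw [show ((α + β) ⊗ₜ[R] (1 : A), (0 : A ⊗[R] L)) =
          (α ⊗ₜ[R] (1 : A), (0 : A ⊗[R] L)) + (β ⊗ₜ[R] (1 : A), 0) by
        rw [Prod.mk_add_mk, add_zero, TensorProduct.add_tmul]]
      exact hφL.1 _ _
    · intro r α
      try dsimp only
      rw [show ((r • α) ⊗ₜ[R] (1 : A), (0 : A ⊗[R] L)) =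
          r • (α ⊗ₜ[R] (1 : A), (0 : A ⊗[R] L)) by
        rw [Prod.smul_mk, smul_zero, TensorProduct.smul_tmul']]
      exact hφL.2 _ _
  have c2L : IsLinearMap R
      (fun α : L => φL ((0 : L ⊗[R] A), (1 : A) ⊗ₜ[R] α)) := by
    constructor
    · intro α β
      try dsimp only
      rw [show ((0 : L ⊗[R] A), (1 : A) ⊗ₜ[R] (α + β)) =
          ((0 : L ⊗[R] A), (1 : A) ⊗ₜ[R] α) + (0, (1 : A) ⊗ₜ[R] β) by
        rw [Prod.mk_add_mk, add_zero, TensorProduct.tmul_add]]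
      exact hφL.1 _ _
    · intro r α
      try dsimp only
      rw [show ((0 : L ⊗[R] A), (1 : A) ⊗ₜ[R] (r • α)) =
          r • ((0 : L ⊗[R] A), (1 : A) ⊗ₜ[R] α) by
        rw [Prod.smul_mk, smul_zero, TensorProduct.tmul_smul]]
      exact hφL.2 _ _
  obtain ⟨f₁, hf₁, hf₁u⟩ := huniv B (fun a : A => φA (a ⊗ₜ[R] (1 : A)))
    (fun α : L => φL (α ⊗ₜ[R] (1 : A), (0 : A ⊗[R] L))) c1A c1L
    (fun a α => by (try dsimp only); rw [relSM, hSM10, mul_one])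
    (fun α β => by (try dsimp only); rw [← hBR₁]; exact relBR _ _)
    (fun α a => by (try dsimp only); rw [relAN, hAN₁, one_mul])
  obtain ⟨f₂, hf₂, hf₂u⟩ := huniv B (fun a : A => φA ((1 : A) ⊗ₜ[R] a))
    (fun α : L => φL ((0 : L ⊗[R] A), (1 : A) ⊗ₜ[R] α)) c2A c2L
    (fun a α => by (try dsimp only); rw [relSM, hSM01, one_mul])
    (fun α β => by (try dsimp only); rw [← hBR₂]; exact relBR _ _)
    (fun α a => by (try dsimp only); rw [relAN, hAN₂, one_mul])
  -- U is generated by the images of ιA and ιL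
  set S : Subalgebra R U := Algebra.adjoin R (Set.range ιA ∪ Set.range ιL)
    with hSdef
  have memA : ∀ a : A, ιA a ∈ S := fun a =>
    Algebra.subset_adjoin (Or.inl ⟨a, rfl⟩)
  have memL : ∀ α : L, ιL α ∈ S := fun α =>
    Algebra.subset_adjoin (Or.inr ⟨α, rfl⟩)
  have cSA : IsAlgHomFun R (fun a : A => (⟨ιA a, memA a⟩ : ↥S)) := by
    refine ⟨⟨fun a b => ?_, fun r a => ?_⟩, ?_, fun a b => ?_⟩
    · exact Subtype.ext (by simpa using hiA.1.1 a b)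
    · exact Subtype.ext (by simpa using hiA.1.2 r a)
    · exact Subtype.ext (by simpa using hiA.2.1)
    · exact Subtype.ext (by simpa using hiA.2.2 a b)
  have cSL : IsLinearMap R (fun α : L => (⟨ιL α, memL α⟩ : ↥S)) := by
    constructor
    · intro a b; exact Subtype.ext (by simpa using hiL.1 a b)
    · intro r a; exact Subtype.ext (by simpa using hiL.2 r a)
  obtain ⟨g, hg, _⟩ := huniv (↥S) (fun a : A => (⟨ιA a, memA a⟩ : ↥S))
    (fun α : L => (⟨ιL α, memL α⟩ : ↥S)) cSA cSL
    (fun a x => Subtype.ext (by simpa using hAL a x))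
    (fun x y => Subtype.ext (by simpa using hLL x y))
    (fun x a => Subtype.ext (by simpa using hLA x a))
  obtain ⟨g', hg', hg'u⟩ := huniv U ιA ιL hiA hiL hAL hLL hLA
  have hval : S.val.comp g = g' :=
    hg'u _ ⟨fun a => congrArg S.val (hg.1 a), fun α => congrArg S.val (hg.2 α)⟩
  have hid : AlgHom.id R U = g' := hg'u _ ⟨fun a => rfl, fun α => rfl⟩
  have hgenU : ∀ u : U, u ∈ S := by
    intro u
    have e : S.val (g u) = u := by
      have e2 := congrArg (fun f : U →ₐ[R] U => f u) (hval.trans hid.symm)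
      simpa using e2
    rw [← e]; exact (g u).2
  have Uind : ∀ p : U → Prop, (∀ a, p (ιA a)) → (∀ α, p (ιL α)) →
      (∀ r : R, p (algebraMap R U r)) → (∀ u v, p u → p v → p (u + v)) →
      (∀ u v, p u → p v → p (u * v)) → ∀ u, p u := by
    intro p pA pL pr pa pm u
    have hu2 : u ∈ Algebra.adjoin R (Set.range ιA ∪ Set.range ιL) := hgenU u
    induction hu2 using Algebra.adjoin_induction with
    | mem x hx => rcases hx with ⟨a, rfl⟩ | ⟨α, rfl⟩
                  exacts [pA a, pL α]
    | algebraMap r => exact pr r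
    | add x y _ _ hx hy => exact pa x y hx hy
    | mul x y _ _ hx hy => exact pm x y hx hy
  -- commutation of the two factor maps
  have pAA : ∀ a b : A, φA (a ⊗ₜ[R] (1 : A)) * φA ((1 : A) ⊗ₜ[R] b) =
      φA ((1 : A) ⊗ₜ[R] b) * φA (a ⊗ₜ[R] (1 : A)) := by
    intro a b
    rw [← hφA.2.2, ← hφA.2.2, mul_comm]
  have pLA : ∀ (α : L) (b : A),
      φL (α ⊗ₜ[R] (1 : A), (0 : A ⊗[R] L)) * φA ((1 : A) ⊗ₜ[R] b) =
        φA ((1 : A) ⊗ₜ[R] b) * φL (α ⊗ₜ[R] (1 : A), (0 : A ⊗[R] L)) := by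
    intro α b
    have e := relAN (α ⊗ₜ[R] (1 : A), (0 : A ⊗[R] L)) ((1 : A) ⊗ₜ[R] b)
    rw [hAN₁, an1, zero_tmul, hφA.1.map_zero] at e
    exact sub_eq_zero.mp e
  have pAL : ∀ (a : A) (β : L),
      φA (a ⊗ₜ[R] (1 : A)) * φL ((0 : L ⊗[R] A), (1 : A) ⊗ₜ[R] β) =
        φL ((0 : L ⊗[R] A), (1 : A) ⊗ₜ[R] β) * φA (a ⊗ₜ[R] (1 : A)) := by
    intro a β
    have e := relAN ((0 : L ⊗[R] A), (1 : A) ⊗ₜ[R] β) (a ⊗ₜ[R] (1 : A))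
    rw [hAN₂, an1, tmul_zero, hφA.1.map_zero] at e
    exact (sub_eq_zero.mp e).symm
  have pLL : ∀ (α β : L),
      φL (α ⊗ₜ[R] (1 : A), (0 : A ⊗[R] L)) * φL ((0 : L ⊗[R] A), (1 : A) ⊗ₜ[R] β) =
        φL ((0 : L ⊗[R] A), (1 : A) ⊗ₜ[R] β) * φL (α ⊗ₜ[R] (1 : A), (0 : A ⊗[R] L)) := by
    intro α β
    have e := relBR (α ⊗ₜ[R] (1 : A), (0 : A ⊗[R] L))
      ((0 : L ⊗[R] A), (1 : A) ⊗ₜ[R] β)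
    rw [hBR₃, hφL.map_zero] at e
    exact sub_eq_zero.mp e.symm
  have hrt : ∀ c : B, (∀ a, Commute c (f₂ (ιA a))) →
      (∀ α, Commute c (f₂ (ιL α))) → ∀ v, Commute c (f₂ v) := by
    intro c hA hL v
    refine Uind (fun v => Commute c (f₂ v)) hA hL ?_ ?_ ?_ v
    · intro r
      rw [AlgHom.commutes]
      exact (Algebra.commutes r c).symm
    · intro x y hx hy
      rw [map_add]; exact hx.add_right hy
    · intro x y hx hy
      rw [map_mul]; exact hx.mul_right hy
  have hcomm : ∀ u v : U, Commute (f₁ u) (f₂ v) := by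
    intro u
    refine Uind (fun u => ∀ v, Commute (f₁ u) (f₂ v))
      (fun a => hrt _ (fun b => ?_) (fun β => ?_))
      (fun α => hrt _ (fun b => ?_) (fun β => ?_)) ?_ ?_ ?_ u
    · rw [hf₁.1 a, hf₂.1 b]; exact pAA a b
    · rw [hf₁.1 a, hf₂.2 β]; exact pAL a β
    · rw [hf₁.2 α, hf₂.1 b]; exact pLA α b
    · rw [hf₁.2 α, hf₂.2 β]; exact pLL α β
    · intro r v
      rw [AlgHom.commutes]
      exact Algebra.commutes r (f₂ v)
    · intro x y hx hy v
      rw [map_add]; exact (hx v).add_left (hy v)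
    · intro x y hx hy v
      rw [map_mul]; exact (hx v).mul_left (hy v)
  refine ⟨Algebra.TensorProduct.lift f₁ f₂ hcomm, ⟨?_, ?_⟩, ?_⟩
  · intro c
    induction c using TensorProduct.induction_on with
    | zero => rw [map_zero, map_zero, hφA.1.map_zero]
    | tmul a b =>
      rw [hjA, Algebra.TensorProduct.lift_tmul, hf₁.1, hf₂.1,
        show a ⊗ₜ[R] b = (a ⊗ₜ[R] (1 : A)) * ((1 : A) ⊗ₜ[R] b) by
          rw [Algebra.TensorProduct.tmul_mul_tmul, mul_one, one_mul],
        hφA.2.2]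
    | add c c' hc hc' => rw [map_add, map_add, hc, hc', hφA.1.1]
  · refine prodInd (fun x => Algebra.TensorProduct.lift f₁ f₂ hcomm (jLl x) = φL x)
      ?_ ?_ ?_ ?_
    · try dsimp only
      rw [map_zero, map_zero, hφL.map_zero]
    · intro u v hu hv
      try dsimp only at hu hv ⊢
      rw [map_add, map_add, hu, hv, hφL.1]
    · intro α a
      try dsimp only
      rw [hjL1, Algebra.TensorProduct.lift_tmul, hf₁.2, hf₂.1, pLA α a, relSM,
        hSM10, sm1, mul_one]
    · intro a α
      try dsimp only
      rw [hjL2, Algebra.TensorProduct.lift_tmul, hf₁.1, hf₂.2, relSM, hSM01,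
        sm1, mul_one]
  · rintro F' ⟨hF'A, hF'L⟩
    have hLft : F'.comp Algebra.TensorProduct.includeLeft = f₁ := by
      refine hf₁u _ ⟨fun a => ?_, fun α => ?_⟩
      · show F' (ιA a ⊗ₜ[R] (1 : U)) = φA (a ⊗ₜ[R] (1 : A))
        rw [show ιA a ⊗ₜ[R] (1 : U) = jAh (a ⊗ₜ[R] (1 : A)) by
          rw [hjA, hiA.2.1]]
        exact hF'A _
      · show F' (ιL α ⊗ₜ[R] (1 : U)) = φL (α ⊗ₜ[R] (1 : A), (0 : A ⊗[R] L))
        rw [show ιL α ⊗ₜ[R] (1 : U) = jLl (α ⊗ₜ[R] (1 : A), 0) by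
          rw [hjL1, hiA.2.1]]
        exact hF'L _
    have hRgt : F'.comp Algebra.TensorProduct.includeRight = f₂ := by
      refine hf₂u _ ⟨fun a => ?_, fun α => ?_⟩
      · show F' ((1 : U) ⊗ₜ[R] ιA a) = φA ((1 : A) ⊗ₜ[R] a)
        rw [show (1 : U) ⊗ₜ[R] ιA a = jAh ((1 : A) ⊗ₜ[R] a) by
          rw [hjA, hiA.2.1]]
        exact hF'A _
      · show F' ((1 : U) ⊗ₜ[R] ιL α) = φL ((0 : L ⊗[R] A), (1 : A) ⊗ₜ[R] α)
        rw [show (1 : U) ⊗ₜ[R] ιL α = jLl (0, (1 : A) ⊗ₜ[R] α) by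
          rw [hjL2, hiA.2.1]]
        exact hF'L _
    refine Algebra.TensorProduct.ext' fun u v => ?_
    have e1 : F' (u ⊗ₜ[R] (1 : U)) = f₁ u := AlgHom.congr_fun hLft u
    have e2 : F' ((1 : U) ⊗ₜ[R] v) = f₂ v := AlgHom.congr_fun hRgt v
    rw [Algebra.TensorProduct.lift_tmul, ← e1, ← e2, ← map_mul,
      Algebra.TensorProduct.tmul_mul_tmul, mul_one, one_mul]
end

section
/- Let $(A,\Delta,\varepsilon)$ be a commutative $R$-bialgebra, $L$ an $(R,A)$-Lie algebra, and $\omega^{\otimes}\colon L\to\mathrm{Der}(A\otimes A)$ an action of the $R$-Lie algebra $L$ on $A\otimes A$ by derivations such that $\Delta$ is $L$-equivariant and $(a\alpha)(b\otimes c) = \Delta(a)\cdot\alpha(b\otimes c)$ for all $a,b,c\in A$, $\alpha\in L$. Then $L^{\otimes} = (A\otimes A)\otimes_A L$ acquires an $(R, A\otimes A)$-Lie algebra structure such that $(\Delta,\Delta\otimes\mathrm{Id})\colon(A,L)\to(A\otimes A, L^{\otimes})$ is a morphism of Lie-Rinehart algebras. -/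
open TensorProduct

universe u v w x y

set_option linter.unusedSectionVars false

namespace Stmt13Aux

variable {R : Type u} [CommRing R] {A : Type v} [CommRing A] [Algebra R A]
  {B : Type v} [CommRing B] [Algebra R B] [Algebra A B] [IsScalarTower R A B]
  [SMulCommClass A R B]
  {L : Type v} [AddCommGroup L] [Module R L] [Module A L] [IsScalarTower R A L]

structure Hyp (br : L → L → L) (an : L → A → A) (ω' : L → B → B) : Prop where
  hsm1 : ∀ a : A, IsLinearMap R (fun x : L => a • x)
  hbr1 : ∀ x : L, IsLinearMap R (br x)
  hbr2 : ∀ y : L, IsLinearMap R fun x : L => br x y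
  hbr3 : ∀ x : L, br x x = 0
  hbr4 : ∀ x y z : L, br x (br y z) = br (br x y) z + br y (br x z)
  han1 : ∀ x : L, IsLinearMap R (an x)
  han2 : ∀ a : A, IsLinearMap R fun x : L => an x a
  han3 : ∀ (x : L) (a b : A), an x (a * b) = an x a * b + a * an x b
  han4 : ∀ (x y : L) (a : A), an (br x y) a = an x (an y a) - an y (an x a)
  han5 : ∀ (a : A) (x : L) (b : A), an (a • x) b = a * an x b
  hbr5 : ∀ (x : L) (a : A) (y : L), br x (a • y) = a • br x y + (an x a) • y
  hlin : ∀ x : L, IsLinearMap R (ω' x)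
  hlinx : ∀ u : B, IsLinearMap R fun x : L => ω' x u
  hder : ∀ (x : L) (u v : B), ω' x (u * v) = ω' x u * v + u * ω' x v
  hlie : ∀ (x y : L) (u : B), ω' (br x y) u = ω' x (ω' y u) - ω' y (ω' x u)
  hequiv : ∀ (x : L) (a : A), ω' x (algebraMap A B a) = algebraMap A B (an x a)
  hA : ∀ (a : A) (x : L) (u : B), ω' (a • x) u = algebraMap A B a * ω' x u

variable {br : L → L → L} {an : L → A → A} {ω' : L → B → B}

namespace Hyp
variable (H : Hyp (R := R) br an ω')
include H

lemma om_add (x : L) (u v : B) : ω' x (u + v) = ω' x u + ω' x v := (H.hlin x).map_add u v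
lemma om_addx (x y : L) (u : B) : ω' (x + y) u = ω' x u + ω' y u := (H.hlinx u).map_add x y
lemma om_smul (x : L) (r : R) (u : B) : ω' x (r • u) = r • ω' x u := (H.hlin x).map_smul r u
lemma om_smulx (r : R) (x : L) (u : B) : ω' (r • x) u = r • ω' x u := (H.hlinx u).map_smul r x
lemma om_zero (x : L) : ω' x 0 = 0 := (H.hlin x).map_zero
lemma om_zerox (u : B) : ω' (0 : L) u = 0 := (H.hlinx u).map_zero
lemma om_neg (x : L) (u : B) : ω' x (-u) = - ω' x u := (H.hlin x).map_neg u
lemma om_negx (x : L) (u : B) : ω' (-x) u = - ω' x u := (H.hlinx u).map_neg x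
lemma om_one (x : L) : ω' x 1 = 0 := by
  have := H.hder x 1 1
  simp only [mul_one, one_mul] at this
  exact left_eq_add.mp this

lemma om_asmul (a : A) (x : L) (u : B) : ω' x ((a : A) • u) =
    algebraMap A B (an x a) * u + algebraMap A B a * ω' x u := by
  rw [Algebra.smul_def, H.hder, H.hequiv]

lemma br_anti (x y : L) : br x y = - br y x := by
  have h0 := H.hbr3 (x + y)
  rw [(H.hbr2 (x+y)).map_add] at h0
  rw [(H.hbr1 x).map_add, (H.hbr1 y).map_add, H.hbr3, H.hbr3] at h0
  rw [eq_neg_iff_add_eq_zero]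
  rw [zero_add, add_zero] at h0
  exact h0


lemma br_smul_left (a : A) (x y : L) : br (a • x) y = a • br x y - (an y a) • x := by
  rw [H.br_anti, H.hbr5, H.br_anti y x]
  simp only [smul_neg]
  abel

/-- the anchor, as an additive hom into `R`-linear endomorphisms of `B`. -/
noncomputable def anH : (B ⊗[A] L) →+ (B →ₗ[R] B) :=
  TensorProduct.liftAddHom
    (AddMonoidHom.mk' (fun u =>
      AddMonoidHom.mk' (fun x => (
        { toFun := fun v => u * ω' x v
          map_add' := fun v w => by
            show u * ω' x (v + w) = u * ω' x v + u * ω' x w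
            rw [H.om_add, mul_add]
          map_smul' := fun r v => by
            show u * ω' x (r • v) = r • (u * ω' x v)
            rw [H.om_smul, mul_smul_comm] } : B →ₗ[R] B))
        (fun x y => by ext v; simp [H.om_addx, mul_add]))
      (fun u u' => by ext v; simp [add_mul]))
    (fun a u x => by
      ext v
      simp only [AddMonoidHom.mk'_apply, LinearMap.coe_mk, AddHom.coe_mk]
      rw [H.hA, Algebra.smul_def]
      ring)

@[simp] lemma anH_tmul (u : B) (x : L) (v : B) :
    H.anH (u ⊗ₜ[A] x) v = u * ω' x v := rfl

/-- inner bracket -/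
noncomputable def innerBr (u : B) (α : L) : B ⊗[A] L →+ B ⊗[A] L :=
  TensorProduct.liftAddHom
    (AddMonoidHom.mk' (fun v => AddMonoidHom.mk' (fun β =>
        (u * v) ⊗ₜ[A] br α β - (v * ω' β u) ⊗ₜ[A] α + (u * ω' α v) ⊗ₜ[A] β)
      (fun β β' => by
        simp only [(H.hbr1 α).map_add, H.om_addx, tmul_add, add_tmul, mul_add]
        abel))
      (fun v v' => by
        ext β
        simp only [AddMonoidHom.mk'_apply, AddMonoidHom.add_apply,
          H.om_add, mul_add, add_mul, add_tmul, tmul_add]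
        abel))
    (fun a v β => by
      simp only [AddMonoidHom.mk'_apply]
      rw [H.hbr5, H.hA, H.om_asmul]
      rw [Algebra.smul_def a v]
      simp only [tmul_add, tmul_smul, smul_tmul', smul_eq_mul, mul_add, add_tmul,
        Algebra.smul_def, mul_comm, mul_assoc, mul_left_comm]
      abel)

@[simp] lemma innerBr_tmul (u : B) (α : L) (v : B) (β : L) :
    H.innerBr u α (v ⊗ₜ[A] β) =
      (u * v) ⊗ₜ[A] br α β - (v * ω' β u) ⊗ₜ[A] α + (u * ω' α v) ⊗ₜ[A] β := rfl

end Hyp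

lemma addHom_ext {P : Type v} [AddCommMonoid P] {f g : B ⊗[A] L →+ P}
    (h : ∀ (u : B) (x : L), f (u ⊗ₜ[A] x) = g (u ⊗ₜ[A] x)) : f = g := by
  apply AddMonoidHom.ext
  intro z
  induction z using TensorProduct.induction_on with
  | zero => simp
  | tmul u x => exact h u x
  | add z w hz hw => simp [hz, hw]


namespace Hyp
variable (H : Hyp (R := R) br an ω')

/-- the bracket, as a bi-additive hom -/
noncomputable def brH : B ⊗[A] L →+ (B ⊗[A] L) →+ (B ⊗[A] L) :=
  TensorProduct.liftAddHom
    (AddMonoidHom.mk' (fun u => AddMonoidHom.mk' (fun α => H.innerBr u α)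
      (fun α α' => by
        apply addHom_ext
        intro v β
        simp only [innerBr_tmul, AddMonoidHom.add_apply, (H.hbr2 β).map_add, H.om_addx,
          add_tmul, tmul_add, mul_add, add_mul]
        abel))
      (fun u u' => by
        refine AddMonoidHom.ext fun α => ?_
        show H.innerBr (u + u') α = H.innerBr u α + H.innerBr u' α
        apply addHom_ext
        intro v β
        simp only [AddMonoidHom.mk'_apply, innerBr_tmul, AddMonoidHom.add_apply,
          H.om_add, add_tmul, tmul_add, mul_add, add_mul]
        abel))
    (fun a u α => by
      simp only [AddMonoidHom.mk'_apply]
      apply addHom_ext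
      intro v β
      simp only [innerBr_tmul]
      rw [H.br_smul_left, H.hA, H.om_asmul]
      rw [Algebra.smul_def a u]
      simp only [tmul_sub, tmul_smul, smul_tmul', smul_eq_mul, mul_add, add_tmul, sub_tmul,
        mul_sub, Algebra.smul_def, mul_comm, mul_assoc, mul_left_comm]
      abel)

@[simp] lemma brH_tmul (u : B) (α : L) (v : B) (β : L) :
    H.brH (u ⊗ₜ[A] α) (v ⊗ₜ[A] β) =
      (u * v) ⊗ₜ[A] br α β - (v * ω' β u) ⊗ₜ[A] α + (u * ω' α v) ⊗ₜ[A] β := rfl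


-- R-linearity in the second argument of the bracket
lemma brH_smul_right (r : R) (z w : B ⊗[A] L) :
    H.brH z (r • w) = r • H.brH z w := by
  induction z using TensorProduct.induction_on with
  | zero => simp
  | add z₁ z₂ h1 h2 => simp [AddMonoidHom.add_apply, h1, h2, smul_add]
  | tmul u α =>
    induction w using TensorProduct.induction_on with
    | zero => simp
    | add w₁ w₂ h1 h2 => simp [map_add, h1, h2, smul_add]
    | tmul v β =>
      rw [smul_tmul']
      simp only [brH_tmul, H.om_smul, smul_eq_mul, mul_smul_comm, smul_mul_assoc,
        smul_tmul', smul_sub, smul_add]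

lemma brH_smul_left (r : R) (z w : B ⊗[A] L) :
    H.brH (r • z) w = r • H.brH z w := by
  induction w using TensorProduct.induction_on with
  | zero => simp
  | add w₁ w₂ h1 h2 => simp [map_add, h1, h2, smul_add]
  | tmul v β =>
    induction z using TensorProduct.induction_on with
    | zero => simp
    | add z₁ z₂ h1 h2 =>
      simp only [smul_add, map_add, AddMonoidHom.add_apply, h1, h2]
    | tmul u α =>
      rw [smul_tmul']
      simp only [brH_tmul, H.om_smulx, H.om_smul, (H.hbr2 β).map_smul, smul_eq_mul,
        mul_smul_comm, smul_mul_assoc, smul_tmul', smul_sub, smul_add, tmul_smul]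

lemma brH_anti (z w : B ⊗[A] L) : H.brH z w = - H.brH w z := by
  induction z using TensorProduct.induction_on with
  | zero => simp
  | add z₁ z₂ h1 h2 => simp [map_add, AddMonoidHom.add_apply, h1, h2]; abel
  | tmul u α =>
    induction w using TensorProduct.induction_on with
    | zero => simp
    | add w₁ w₂ h1 h2 => simp [map_add, AddMonoidHom.add_apply, h1, h2]; abel
    | tmul v β =>
      simp only [brH_tmul, H.br_anti α β, tmul_neg, mul_comm]
      abel

lemma brH_self (z : B ⊗[A] L) : H.brH z z = 0 := by
  induction z using TensorProduct.induction_on with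
  | zero => simp
  | add z₁ z₂ h1 h2 =>
    simp only [map_add, AddMonoidHom.add_apply, h1, h2]
    rw [H.brH_anti z₂ z₁]
    abel
  | tmul u α =>
    simp only [brH_tmul, H.hbr3, tmul_zero, mul_comm]
    abel

lemma anH_smul (r : R) (z : B ⊗[A] L) : H.anH (r • z) = r • H.anH z := by
  induction z using TensorProduct.induction_on with
  | zero => simp
  | add z₁ z₂ h1 h2 => simp [map_add, h1, h2, smul_add]
  | tmul u x =>
    rw [smul_tmul']
    ext v
    simp [smul_mul_assoc]

lemma anH_der (z : B ⊗[A] L) (u v : B) :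
    H.anH z (u * v) = H.anH z u * v + u * H.anH z v := by
  induction z using TensorProduct.induction_on with
  | zero => simp
  | add z₁ z₂ h1 h2 => simp only [map_add, LinearMap.add_apply, h1, h2]; ring
  | tmul w x => simp only [anH_tmul, H.hder]; ring

lemma anH_bsmul (c : B) (z : B ⊗[A] L) (v : B) :
    H.anH (c • z) v = c * H.anH z v := by
  induction z using TensorProduct.induction_on with
  | zero => simp
  | add z₁ z₂ h1 h2 =>
    simp only [smul_add, map_add, LinearMap.add_apply, h1, h2]; ring
  | tmul u x =>
    rw [smul_tmul']
    simp only [anH_tmul, smul_eq_mul]; ring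

lemma anH_br (z w : B ⊗[A] L) (c : B) :
    H.anH (H.brH z w) c = H.anH z (H.anH w c) - H.anH w (H.anH z c) := by
  induction z using TensorProduct.induction_on with
  | zero => simp
  | add z₁ z₂ h1 h2 =>
    simp only [map_add, AddMonoidHom.add_apply, LinearMap.add_apply, h1, h2,
      (H.anH z₁).map_add, (H.anH z₂).map_add, (H.anH w).map_add]
    abel
  | tmul u α =>
    induction w using TensorProduct.induction_on with
    | zero => simp [H.om_zero]
    | add w₁ w₂ h1 h2 =>
      simp only [map_add, AddMonoidHom.add_apply, LinearMap.add_apply, h1, h2,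
        (H.anH (u ⊗ₜ[A] α)).map_add]
      abel
    | tmul v β =>
      simp only [brH_tmul, map_add, map_sub, LinearMap.add_apply, LinearMap.sub_apply,
        anH_tmul, H.hlie, H.hder]
      ring

lemma brH_leibniz (z w : B ⊗[A] L) (c : B) :
    H.brH z (c • w) = c • H.brH z w + (H.anH z c) • w := by
  induction z using TensorProduct.induction_on with
  | zero => simp
  | add z₁ z₂ h1 h2 =>
    simp only [map_add, AddMonoidHom.add_apply, LinearMap.add_apply, h1, h2, smul_add,
      add_smul]
    abel
  | tmul u α =>
    induction w using TensorProduct.induction_on with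
    | zero => simp [H.om_zero]
    | add w₁ w₂ h1 h2 =>
      simp only [smul_add, map_add, h1, h2]
      abel
    | tmul v β =>
      rw [smul_tmul']
      simp only [brH_tmul, anH_tmul, smul_eq_mul, H.hder, smul_tmul', smul_sub, smul_add,
        mul_add, add_tmul, mul_comm, mul_assoc, mul_left_comm]
      abel


lemma brH_jacobi (x y z : B ⊗[A] L) :
    H.brH x (H.brH y z) = H.brH (H.brH x y) z + H.brH y (H.brH x z) := by
  induction x using TensorProduct.induction_on with
  | zero => simp
  | add x₁ x₂ h1 h2 =>
    simp only [map_add, AddMonoidHom.add_apply, h1, h2]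
    abel
  | tmul u α =>
  induction y using TensorProduct.induction_on with
  | zero => simp
  | add y₁ y₂ h1 h2 =>
    simp only [map_add, AddMonoidHom.add_apply, h1, h2]
    abel
  | tmul v β =>
  induction z using TensorProduct.induction_on with
  | zero => simp
  | add z₁ z₂ h1 h2 =>
    simp only [map_add, AddMonoidHom.add_apply, h1, h2]
    abel
  | tmul w γ =>
  simp only [brH_tmul, map_add, map_sub, AddMonoidHom.add_apply, AddMonoidHom.sub_apply]
  rw [H.hbr4 α β γ, H.br_anti β α]
  simp only [H.hder, H.hlie, H.om_add, H.om_neg, tmul_add, tmul_sub, tmul_neg,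
    add_tmul, sub_tmul, neg_tmul, mul_add, add_mul, mul_sub, sub_mul, mul_neg, neg_mul,
    neg_neg, mul_comm, mul_assoc, mul_left_comm]
  abel

end Hyp

end Stmt13Aux


/-- for a commutative bialgebra `A`, an `(R,A)`-Lie algebra `L`
and a `Δ`-equivariant action `ω⊗` of `L` on `A ⊗ A` by derivations satisfying
`(aα)(u) = Δ(a)·α(u)`, the induced module `L^⊗ = (A ⊗ A) ⊗[A] L` (the
`A`-algebra `B ≅ A ⊗ A` via `Δ`) acquires an `(R, A ⊗ A)`-Lie algebra
structure such that `(Δ, Δ ⊗ Id) : (A, L) → (A ⊗ A, L^⊗)` is a morphism of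
Lie-Rinehart algebras. -/
theorem stmt13 (R : Type u) [CommRing R] (A : Type v) [CommRing A] [Bialgebra R A]
    -- `B` is `A ⊗[R] A` viewed as an `A`-algebra via the comultiplication `Δ`
    (B : Type v) [CommRing B] [Algebra R B] [Algebra A B] [IsScalarTower R A B]
    [SMulCommClass A R B]
    (e : B ≃ₐ[R] A ⊗[R] A) (he : ∀ a : A, e (algebraMap A B a) = Bialgebra.comulAlgHom R A a)
    (L : Type v) [AddCommGroup L] [Module R L] [Module A L] [IsScalarTower R A L]
    (br : L → L → L) (an : L → A → A)
    (h : IsLR R A L (fun a x => a • x) br an)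
    -- the action `ω⊗` of `L` on `A ⊗ A ≅ B` by derivations
    (ω' : L → B → B)
    (hlin : ∀ x : L, IsLinearMap R (ω' x))
    (hlinx : ∀ u : B, IsLinearMap R fun x : L => ω' x u)
    (hder : ∀ (x : L) (u v : B), ω' x (u * v) = ω' x u * v + u * ω' x v)
    (hlie : ∀ (x y : L) (u : B), ω' (br x y) u = ω' x (ω' y u) - ω' y (ω' x u))
    -- `Δ` is `L`-equivariant
    (hequiv : ∀ (x : L) (a : A),
      ω' x (algebraMap A B a) = algebraMap A B (an x a))
    -- `(aα)(b ⊗ c) = Δ(a) · α(b ⊗ c)`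
    (hA : ∀ (a : A) (x : L) (u : B),
      ω' (a • x) u = algebraMap A B a * ω' x u) :
    ∃ (br' : (B ⊗[A] L) → (B ⊗[A] L) → (B ⊗[A] L))
      (an' : (B ⊗[A] L) → B → B),
      (∀ (u v : B) (α β : L),
        br' (u ⊗ₜ[A] α) (v ⊗ₜ[A] β) =
          (u * v) ⊗ₜ[A] br α β - (v * ω' β u) ⊗ₜ[A] α + (u * ω' α v) ⊗ₜ[A] β) ∧
      (∀ (u : B) (α : L) (v : B), an' (u ⊗ₜ[A] α) v = u * ω' α v) ∧
      IsLR R B (B ⊗[A] L) (fun c z => c • z) br' an' ∧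
      IsLRHom R (fun a x => a • x) br an (fun c z => c • z) br' an'
        (algebraMap A B) (fun x : L => (1 : B) ⊗ₜ[A] x) := by
  obtain ⟨h1, h2, h3, h4, h5, h6, h7, h8, h9, h10, h11, h12, h13, h14, h15⟩ := h
  have H : Stmt13Aux.Hyp (R := R) br an ω' :=
    ⟨h1, h6, h7, h8, h9, h10, h11, h12, h13, h14, h15, hlin, hlinx, hder, hlie, hequiv, hA⟩
  refine ⟨fun z w => H.brH z w, fun z v => H.anH z v, ?_, ?_, ?_, ?_⟩
  · intro u v α β
    dsimp only
    rw [Stmt13Aux.Hyp.brH_tmul]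
  · intro u α v; rfl
  · refine ⟨?_, ?_, ?_, ?_, ?_, ?_, ?_, ?_, ?_, ?_, ?_, ?_, ?_, ?_, ?_⟩
    · exact fun c => ⟨fun z w => smul_add c z w, fun r z => smul_comm c r z⟩
    · exact fun z => one_smul B z
    · exact fun c d z => mul_smul c d z
    · exact fun c d z => add_smul c d z
    · exact fun r c z => smul_assoc r c z
    · exact fun z => ⟨fun w w' => (H.brH z).map_add w w', fun r w => H.brH_smul_right r z w⟩
    · exact fun w => ⟨fun z z' => by simp [map_add], fun r z => H.brH_smul_left r z w⟩
    · exact fun z => H.brH_self z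
    · exact fun x y z => H.brH_jacobi x y z
    · exact fun z => ⟨(H.anH z).map_add, (H.anH z).map_smul⟩
    · exact fun v => ⟨fun z z' => by simp [map_add], fun r z => by dsimp only; rw [H.anH_smul]; rfl⟩
    · exact fun z u v => H.anH_der z u v
    · exact fun z w c => H.anH_br z w c
    · exact fun c z v => H.anH_bsmul c z v
    · exact fun z c w => H.brH_leibniz z w c
  · refine ⟨⟨⟨fun a b => map_add _ a b, fun r a => ?_⟩, map_one _, fun a b => map_mul _ a b⟩,
      ⟨fun x y => tmul_add 1 x y, fun r x => tmul_smul r 1 x⟩, ?_, ?_, ?_⟩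
    · rw [Algebra.smul_def r a, map_mul, ← IsScalarTower.algebraMap_apply, ← Algebra.smul_def]
    · intro x y
      dsimp only
      rw [Stmt13Aux.Hyp.brH_tmul]
      simp [H.om_one]
    · intro a x
      dsimp only
      rw [← smul_tmul, smul_tmul', smul_eq_mul, Algebra.smul_def, mul_one]
    · intro x a
      dsimp only
      rw [Stmt13Aux.Hyp.anH_tmul, one_mul, hequiv]
end
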